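/- arXiv:1405.6000 — 5 statements merged into one kernel-verified Lean document; each statement's English description precedes it below -/
import Mathlib

section
/- Let H be an n×n complex Hermitian matrix whose largest eigenvalue λ₁ is simple (has algebraic multiplicity 1). Then H has exactly k (2 ≤ k ≤ n) distinct eigenvalues if and only if there exist k distinct real numbers λ₁, λ₂, …, λ_k such that: (i) H − λᵢI is a singular matrix for each 2 ≤ i ≤ k; and (ii) ∏_{i=2}^{k} (H − λᵢI) = b·y·y* and H·y = λ₁·y for some nonzero complex number b and some nonzero vector y ∈ ℂⁿ. Moreover, in that case λ₁, λ₂, …, λ_k are exactly the k distinct eigenvalues of H. -/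
open Polynomial Matrix

namespace LWHAux

variable {n : ℕ}

lemma mem_spectrum_iff_det (H : Matrix (Fin n) (Fin n) ℂ) (μ : ℂ) :
    μ ∈ spectrum ℂ H ↔ (H - μ • 1).det = 0 := by
  rw [spectrum.mem_iff, Matrix.isUnit_iff_isUnit_det, isUnit_iff_ne_zero, not_not]
  have h : H - μ • (1 : Matrix (Fin n) (Fin n) ℂ) = -(algebraMap ℂ _ μ - H) := by
    rw [Algebra.algebraMap_eq_smul_one, neg_sub]
  rw [h, Matrix.det_neg, mul_eq_zero]
  simp [pow_ne_zero]

lemma aeval_mulVec (H : Matrix (Fin n) (Fin n) ℂ) (p : ℂ[X]) {lam : ℂ} {v : Fin n → ℂ}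
    (hv : H *ᵥ v = lam • v) (hv0 : v ≠ 0) :
    (aeval H p) *ᵥ v = p.eval lam • v := by
  have hE : Module.End.HasEigenvector (Matrix.toLinAlgEquiv' H) lam v :=
    ⟨Module.End.mem_eigenspace_iff.2 (by rw [Matrix.toLinAlgEquiv'_apply, hv]), hv0⟩
  have h1 := Module.End.aeval_apply_of_hasEigenvector (p := p) hE
  have h2 := Polynomial.aeval_algHom_apply
    (Matrix.toLinAlgEquiv' (R := ℂ) (n := Fin n)).toAlgHom H p
  simp only [AlgEquiv.toAlgHom_apply, AlgEquiv.coe_toAlgHom] at h2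
  rw [h2] at h1
  rw [← Matrix.toLinAlgEquiv'_apply]
  exact h1

lemma aeval_conj (U M : Matrix (Fin n) (Fin n) ℂ) (hU : U * star U = 1)
    (hU' : star U * U = 1) (p : ℂ[X]) :
    aeval (U * M * star U) p = U * aeval M p * star U := by
  let φ : Matrix (Fin n) (Fin n) ℂ →ₐ[ℂ] Matrix (Fin n) (Fin n) ℂ :=
  { toFun := fun A => U * A * star U
    map_one' := by show U * 1 * star U = 1; rw [mul_one, hU]
    map_mul' := fun A B => by
      show U * (A * B) * star U = (U * A * star U) * (U * B * star U)
      have key : star U * (U * (B * star U)) = B * star U := by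
        rw [← mul_assoc, hU', one_mul]
      simp only [mul_assoc, key]
    map_zero' := by simp
    map_add' := fun A B => by
      show U * (A + B) * star U = U * A * star U + U * B * star U
      rw [mul_add, add_mul]
    commutes' := fun r => by
      show U * algebraMap ℂ _ r * star U = algebraMap ℂ _ r
      rw [Algebra.algebraMap_eq_smul_one, mul_smul_comm, mul_one, smul_mul_assoc, hU] }
  exact Polynomial.aeval_algHom_apply φ M p

lemma charpoly_conj (U M : Matrix (Fin n) (Fin n) ℂ) (hU : U * star U = 1) :
    (U * M * star U).charpoly = M.charpoly := by
  have hmap : (U.map C) * ((star U).map C) = 1 := by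
    rw [← Matrix.map_mul, hU, Matrix.map_one C C.map_zero C.map_one]
  have hcm : charmatrix (U * M * star U) = (U.map C) * charmatrix M * ((star U).map C) := by
    unfold charmatrix
    rw [mul_sub, sub_mul]
    congr 1
    · have hc : Matrix.scalar (Fin n) (X : ℂ[X]) = (X : ℂ[X]) • 1 := by
        ext i j; simp [Matrix.smul_apply, Matrix.one_apply, Matrix.diagonal_apply]
      rw [hc, mul_smul_comm, mul_one, smul_mul_assoc, hmap]
    · simp only [RingHom.mapMatrix_apply]
      rw [← Matrix.map_mul, ← Matrix.map_mul]
  rw [Matrix.charpoly, Matrix.charpoly, hcm, Matrix.det_mul, Matrix.det_mul]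
  have : (U.map C).det * ((star U).map C).det = 1 := by
    rw [← Matrix.det_mul, hmap, Matrix.det_one]
  calc (U.map C).det * (charmatrix M).det * ((star U).map C).det
      = (charmatrix M).det * ((U.map C).det * ((star U).map C).det) := by ring
    _ = (charmatrix M).det := by rw [this, mul_one]

lemma charpoly_diag (d : Fin n → ℂ) :
    (Matrix.diagonal d).charpoly = ∏ i, (X - C (d i)) := by
  have : charmatrix (Matrix.diagonal d) = Matrix.diagonal (fun i => X - C (d i)) := by
    ext i j
    by_cases h : i = j
    · subst h; simp
    · simp [h, Matrix.diagonal_apply_ne _ h]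
  rw [Matrix.charpoly, this, Matrix.det_diagonal]

lemma vecMulVec_mulVec (y w v : Fin n → ℂ) :
    (Matrix.vecMulVec y w) *ᵥ v = (w ⬝ᵥ v) • y := by
  ext a
  simp only [Matrix.mulVec, dotProduct, Matrix.vecMulVec_apply, Pi.smul_apply,
    smul_eq_mul, Finset.sum_mul]
  exact Finset.sum_congr rfl fun l _ => by ring

lemma conj_single (U : Matrix (Fin n) (Fin n) ℂ) (i₀ : Fin n) (c : ℂ) :
    U * Matrix.diagonal (Pi.single i₀ c) * star U =
      c • Matrix.vecMulVec (fun j => U j i₀) (star fun j => U j i₀) := by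
  ext a b
  rw [Matrix.mul_apply]
  simp only [Matrix.mul_diagonal, Matrix.star_apply, Pi.single_apply, Matrix.smul_apply,
    Matrix.vecMulVec_apply, Pi.star_apply, smul_eq_mul, mul_ite, ite_mul, mul_zero, zero_mul]
  rw [Finset.sum_ite_eq' Finset.univ i₀]
  simp [mul_comm, mul_assoc, mul_left_comm]

end LWHAux

/-- **Theorem (Li–Wang–Huang).** Let `H` be an `n×n` complex Hermitian matrix whose largest
eigenvalue `λ₁` is simple. Then `H` has exactly `k` (`2 ≤ k ≤ n`) distinct eigenvalues iff
there exist `k` distinct real numbers `λ₁, …, λ_k` such that (i) `H − λᵢI` is singular for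
`2 ≤ i ≤ k`, and (ii) `∏_{i=2}^k (H − λᵢI) = b y y*` and `H y = λ₁ y` for some nonzero `b ∈ ℂ`
and nonzero `y ∈ ℂⁿ`. Moreover, such `λ₁, …, λ_k` are exactly the distinct eigenvalues of `H`. -/
theorem hermitian_distinct_eigenvalues_iff
    (n k : ℕ) (hk2 : 2 ≤ k) (hkn : k ≤ n)
    (H : Matrix (Fin n) (Fin n) ℂ) (hH : H.IsHermitian)
    (lam1 : ℝ) (hmem : (lam1 : ℂ) ∈ spectrum ℂ H)
    (hmax : ∀ x : ℝ, (x : ℂ) ∈ spectrum ℂ H → x ≤ lam1)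
    (hsimple : H.charpoly.rootMultiplicity (lam1 : ℂ) = 1) :
    ((spectrum ℂ H).ncard = k ↔
      ∃ μ : Fin k → ℝ, Function.Injective μ ∧
        (∀ i : Fin k, i ≠ ⟨0, by omega⟩ → (H - (μ i : ℂ) • 1).det = 0) ∧
        ∃ b : ℂ, b ≠ 0 ∧ ∃ y : Fin n → ℂ, y ≠ 0 ∧
          (Polynomial.aeval H)
              (∏ i ∈ Finset.univ.erase (⟨0, by omega⟩ : Fin k), (X - C (μ i : ℂ))) =
            b • Matrix.vecMulVec y (star y) ∧
          H.mulVec y = (μ ⟨0, by omega⟩ : ℂ) • y) ∧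
    (∀ μ : Fin k → ℝ, Function.Injective μ →
      (∀ i : Fin k, i ≠ ⟨0, by omega⟩ → (H - (μ i : ℂ) • 1).det = 0) →
      (∃ b : ℂ, b ≠ 0 ∧ ∃ y : Fin n → ℂ, y ≠ 0 ∧
        (Polynomial.aeval H)
            (∏ i ∈ Finset.univ.erase (⟨0, by omega⟩ : Fin k), (X - C (μ i : ℂ))) =
          b • Matrix.vecMulVec y (star y) ∧
        H.mulVec y = (μ ⟨0, by omega⟩ : ℂ) • y) →
      spectrum ℂ H = Set.range (fun i => (μ i : ℂ))) := by
  have key : ∀ μ : Fin k → ℝ, Function.Injective μ →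
      (∀ i : Fin k, i ≠ ⟨0, by omega⟩ → (H - (μ i : ℂ) • 1).det = 0) →
      (∃ b : ℂ, b ≠ 0 ∧ ∃ y : Fin n → ℂ, y ≠ 0 ∧
        (Polynomial.aeval H)
            (∏ i ∈ Finset.univ.erase (⟨0, by omega⟩ : Fin k), (X - C (μ i : ℂ))) =
          b • Matrix.vecMulVec y (star y) ∧
        H.mulVec y = (μ ⟨0, by omega⟩ : ℂ) • y) →
      spectrum ℂ H = Set.range (fun i => (μ i : ℂ)) := by
    rintro μ hinj hdet ⟨b, hb, y, hy, hprod, heig⟩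
    ext z
    simp only [Set.mem_range]
    constructor
    · intro hz
      by_contra hnz
      push_neg at hnz
      obtain ⟨v, hv0, hveq⟩ :=
        Matrix.exists_mulVec_eq_zero_iff.mpr ((LWHAux.mem_spectrum_iff_det H z).mp hz)
      have hHv : H *ᵥ v = z • v := by
        have h1 : H *ᵥ v - (z • (1 : Matrix (Fin n) (Fin n) ℂ)) *ᵥ v = 0 := by
          rw [← Matrix.sub_mulVec]; exact hveq
        have h2 : (z • (1 : Matrix (Fin n) (Fin n) ℂ)) *ᵥ v = z • v := by
          rw [Matrix.smul_mulVec, Matrix.one_mulVec]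
        rw [h2] at h1; exact sub_eq_zero.mp h1
      set P : ℂ[X] :=
        ∏ i ∈ Finset.univ.erase (⟨0, by omega⟩ : Fin k), (X - C ((μ i : ℝ) : ℂ)) with hPdef
      have hpv : (Polynomial.aeval H) P *ᵥ v = P.eval z • v := LWHAux.aeval_mulVec H P hHv hv0
      have hpz : P.eval z ≠ 0 := by
        rw [hPdef, Polynomial.eval_prod, Finset.prod_ne_zero_iff]
        intro a _
        rw [Polynomial.eval_sub, Polynomial.eval_X, Polynomial.eval_C, sub_ne_zero]
        exact fun h => hnz a h.symm
      rw [hprod, Matrix.smul_mulVec, LWHAux.vecMulVec_mulVec, smul_smul] at hpv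
      have hvc : v = ((P.eval z)⁻¹ * (b * (star y ⬝ᵥ v))) • y := by
        have h3 := congrArg (fun w => (P.eval z)⁻¹ • w) hpv
        simp only [smul_smul] at h3
        rw [inv_mul_cancel₀ hpz, one_smul] at h3
        exact h3.symm
      set c : ℂ := (P.eval z)⁻¹ * (b * (star y ⬝ᵥ v)) with hcdef
      have hc0 : c ≠ 0 := by
        intro h; rw [h, zero_smul] at hvc; exact hv0 hvc
      have hz0 : z = ((μ ⟨0, by omega⟩ : ℝ) : ℂ) := by
        have h3 : H *ᵥ v = (c * ((μ ⟨0, by omega⟩ : ℝ) : ℂ)) • y := by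
          rw [hvc, Matrix.mulVec_smul, heig, smul_smul]
        have h4 : H *ᵥ v = (z * c) • y := by
          rw [hHv, hvc, smul_smul]
        rw [h3] at h4
        have h5 : ((c * ((μ ⟨0, by omega⟩ : ℝ) : ℂ)) - z * c) • y = 0 := by
          rw [sub_smul, h4, sub_self]
        rcases smul_eq_zero.mp h5 with h6 | h6
        · have h7 : c * ((μ ⟨0, by omega⟩ : ℝ) : ℂ) = z * c := sub_eq_zero.mp h6
          have h8 : z * c = ((μ ⟨0, by omega⟩ : ℝ) : ℂ) * c := by rw [← h7]; ring
          exact mul_right_cancel₀ hc0 h8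
        · exact absurd h6 hy
      exact hnz _ hz0.symm
    · rintro ⟨i, rfl⟩
      by_cases h : i = ⟨0, by omega⟩
      · subst h
        apply (LWHAux.mem_spectrum_iff_det H _).mpr
        apply Matrix.exists_mulVec_eq_zero_iff.mp
        refine ⟨y, hy, ?_⟩
        rw [Matrix.sub_mulVec, heig, Matrix.smul_mulVec, Matrix.one_mulVec, sub_self]
      · exact (LWHAux.mem_spectrum_iff_det H _).mpr (hdet i h)
  refine ⟨⟨?_, ?_⟩, key⟩
  · intro hcard
    set U : Matrix (Fin n) (Fin n) ℂ := ↑(hH.eigenvectorUnitary) with hUdef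
    have hU : U * star U = 1 := Matrix.mem_unitaryGroup_iff.mp (hH.eigenvectorUnitary).2
    have hU' : star U * U = 1 := Matrix.mem_unitaryGroup_iff'.mp (hH.eigenvectorUnitary).2
    set d : Fin n → ℂ := fun i => ((hH.eigenvalues i : ℝ) : ℂ) with hd
    have hdcoe : (RCLike.ofReal ∘ hH.eigenvalues : Fin n → ℂ) = d := rfl
    have hspec_d : spectrum ℂ H = Set.range d := by
      conv_lhs => rw [hH.spectral_theorem]
      rw [Unitary.conjStarAlgAut_apply, Unitary.spectrum_star_right_conjugate, hdcoe, spectrum_diagonal]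
    have hchar : H.charpoly = ∏ i, (X - C (d i)) := by
      conv_lhs => rw [hH.spectral_theorem]
      rw [Unitary.conjStarAlgAut_apply, ← hUdef, LWHAux.charpoly_conj _ _ hU, hdcoe, LWHAux.charpoly_diag]
    -- unique index of lam1 among eigenvalues
    have hcount : Multiset.count ((lam1 : ℂ)) (Finset.univ.val.map d) = 1 := by
      have h1 : H.charpoly.roots = Finset.univ.val.map d := by
        rw [hchar]
        have h2 : ∏ i, (X - C (d i)) =
            ((Finset.univ.val.map d).map (fun a => X - C a)).prod := by
          rw [Multiset.map_map]; rfl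
        rw [h2, Polynomial.roots_multiset_prod_X_sub_C]
      rw [← hsimple, ← Polynomial.count_roots, h1]
    rw [Multiset.count_map] at hcount
    obtain ⟨i₀, hi₀⟩ := Multiset.card_eq_one.mp hcount
    have hdi₀ : (lam1 : ℂ) = d i₀ := by
      have h3 : i₀ ∈ Multiset.filter (fun a => (lam1:ℂ) = d a) Finset.univ.val := by
        rw [hi₀]; exact Multiset.mem_singleton_self i₀
      exact (Multiset.mem_filter.mp h3).2
    have huniq : ∀ i, (lam1 : ℂ) = d i → i = i₀ := by
      intro i hi
      have h3 : i ∈ Multiset.filter (fun a => (lam1:ℂ) = d a) Finset.univ.val :=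
        Multiset.mem_filter.mpr ⟨Finset.mem_univ i, hi⟩
      rw [hi₀] at h3; exact Multiset.mem_singleton.mp h3
    -- enumeration of spectrum
    have hfin : (spectrum ℂ H).Finite := by rw [hspec_d]; exact Set.finite_range d
    have hTmem : ∀ x, x ∈ hfin.toFinset ↔ x ∈ spectrum ℂ H := fun x => hfin.mem_toFinset
    have hTcard : hfin.toFinset.card = k := by
      rw [← Set.ncard_eq_toFinset_card _ hfin, hcard]
    have hlamT : (lam1 : ℂ) ∈ hfin.toFinset := (hTmem _).mpr hmem
    set gg := Finset.equivFinOfCardEq hTcard with hgg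
    set σ : Fin k ≃ Fin k := Equiv.swap ⟨0, by omega⟩ (gg ⟨(lam1:ℂ), hlamT⟩) with hσ
    set ν : Fin k → ℂ := fun i => ((gg.symm (σ i)) : ℂ) with hν
    have hν0 : ν ⟨0, by omega⟩ = (lam1 : ℂ) := by
      rw [hν]
      simp only [hσ, Equiv.swap_apply_left, Equiv.symm_apply_apply]
    have hνinj : Function.Injective ν := by
      intro a b hab
      exact σ.injective (gg.symm.injective (Subtype.val_injective hab))
    have hνmem : ∀ i, ν i ∈ spectrum ℂ H := fun i => (hTmem _).mp (gg.symm (σ i)).2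
    have hνcover : ∀ z ∈ spectrum ℂ H, ∃ i, ν i = z := by
      intro z hz
      refine ⟨σ.symm (gg ⟨z, (hTmem z).mpr hz⟩), ?_⟩
      rw [hν]
      simp only [Equiv.apply_symm_apply, Equiv.symm_apply_apply]
    have hνreal : ∀ i, (((ν i).re : ℝ) : ℂ) = ν i := by
      intro i
      obtain ⟨i', hi'⟩ := (hspec_d ▸ hνmem i : ν i ∈ Set.range d)
      rw [← hi']
      simp [hd]
    set μ : Fin k → ℝ := fun i => (ν i).re with hμ
    have hμν : ∀ i, ((μ i : ℝ) : ℂ) = ν i := hνreal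
    have hμinj : Function.Injective μ := by
      intro a b hab
      apply hνinj
      rw [← hμν a, ← hμν b, hab]
    have hμ0 : ((μ ⟨0, by omega⟩ : ℝ) : ℂ) = (lam1 : ℂ) := by rw [hμν, hν0]
    refine ⟨μ, hμinj, fun i _ => (LWHAux.mem_spectrum_iff_det H _).mp
      (by rw [hμν]; exact hνmem i), ?_⟩
    set P : ℂ[X] :=
      ∏ i ∈ Finset.univ.erase (⟨0, by omega⟩ : Fin k), (X - C ((μ i : ℝ) : ℂ)) with hPdef
    set cb : ℂ := P.eval (lam1 : ℂ) with hcb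
    set y : Fin n → ℂ := fun l => U l i₀ with hy
    have hcb0 : cb ≠ 0 := by
      rw [hcb, hPdef, Polynomial.eval_prod, Finset.prod_ne_zero_iff]
      intro a ha
      rw [Polynomial.eval_sub, Polynomial.eval_X, Polynomial.eval_C, sub_ne_zero]
      intro hcontra
      have h4 : ν ⟨0, by omega⟩ = ν a := by rw [hν0, hcontra, hμν]
      exact (Finset.mem_erase.mp ha).1 (hνinj h4).symm
    have hPvals : (fun i => P.eval (d i)) = Pi.single i₀ cb := by
      funext i
      by_cases h : i = i₀
      · subst h; rw [Pi.single_eq_same, hcb, hdi₀]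
      · rw [Pi.single_eq_of_ne h]
        obtain ⟨jj, hjj⟩ := hνcover (d i) (hspec_d ▸ Set.mem_range_self i)
        have hjj0 : jj ≠ ⟨0, by omega⟩ := by
          intro hc; rw [hc, hν0] at hjj; exact h (huniq i hjj)
        rw [hPdef, Polynomial.eval_prod]
        apply Finset.prod_eq_zero (Finset.mem_erase.mpr ⟨hjj0, Finset.mem_univ jj⟩)
        rw [Polynomial.eval_sub, Polynomial.eval_X, Polynomial.eval_C, hμν, hjj, sub_self]
    have hkey : (Polynomial.aeval H) P = cb • Matrix.vecMulVec y (star y) := by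
      conv_lhs => rw [hH.spectral_theorem]
      rw [Unitary.conjStarAlgAut_apply, ← hUdef, LWHAux.aeval_conj _ _ hU hU']
      have hdg : (Polynomial.aeval
          (Matrix.diagonal (RCLike.ofReal ∘ hH.eigenvalues) : Matrix (Fin n) (Fin n) ℂ)) P =
          Matrix.diagonal (fun i => P.eval (d i)) := by
        rw [hdcoe]
        have e1 : (Polynomial.aeval (Matrix.diagonal d)) P =
            Matrix.diagonal (Polynomial.aeval d P) :=
          Polynomial.aeval_algHom_apply (Matrix.diagonalAlgHom ℂ) d P
        have e2 : (Polynomial.aeval d P : Fin n → ℂ) = fun i => P.eval (d i) := by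
          funext i
          have e3 := Polynomial.aeval_algHom_apply (Pi.evalAlgHom ℂ (fun _ => ℂ) i) d P
          simp only [Pi.evalAlgHom_apply] at e3
          rw [← e3, ← Polynomial.coe_aeval_eq_eval]
        rw [e1, e2]
      rw [hdg, hPvals, LWHAux.conj_single]
    have hy0 : y ≠ 0 := by
      intro h0
      have hcol : ∀ l, U l i₀ = 0 := fun l => congrFun h0 l
      have h1 : (star U * U) i₀ i₀ = 0 := by
        rw [Matrix.mul_apply]
        simp [Matrix.star_apply, hcol]
      rw [hU'] at h1
      simp at h1
    have hHy : H *ᵥ y = ((μ ⟨0, by omega⟩ : ℝ) : ℂ) • y := by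
      have hyb : y = ⇑(hH.eigenvectorBasis i₀) := by
        funext l
        exact hH.eigenvectorUnitary_apply l i₀
      have hlam : lam1 = hH.eigenvalues i₀ := Complex.ofReal_inj.mp (by simpa [hd] using hdi₀)
      rw [hyb, hH.mulVec_eigenvectorBasis i₀, hμ0, hlam]
      funext l
      simp [Complex.real_smul]
    exact ⟨cb, hcb0, y, hy0, hkey, hHy⟩
  · rintro ⟨μ, hinj, hdet, hex⟩
    rw [key μ hinj hdet hex]
    have hcinj : Function.Injective (fun i : Fin k => ((μ i : ℝ) : ℂ)) := by
      intro a b h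
      have h' : ((μ a : ℝ) : ℂ) = ((μ b : ℝ) : ℂ) := h
      exact hinj (Complex.ofReal_inj.mp h')
    rw [← Nat.card_coe_set_eq, Nat.card_range_of_injective hcinj,
      Nat.card_eq_fintype_card, Fintype.card_fin]
end

section
/- Let H be an n×n real symmetric matrix whose largest eigenvalue λ₁ is simple (has algebraic multiplicity 1). Then H has exactly k (2 ≤ k ≤ n) distinct eigenvalues if and only if there exist k distinct real numbers λ₁, λ₂, …, λ_k such that: (i) H − λᵢI is singular for each 2 ≤ i ≤ k; and (ii) ∏_{i=2}^{k} (H − λᵢI) = b·y·yᵀ with H·y = λ₁·y, where b is a strictly positive real number and y ∈ ℝⁿ is a nonzero vector. Moreover, in that case λ₁, λ₂, …, λ_k are exactly the k distinct eigenvalues of H. -/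
open Polynomial Matrix

section Aux

private lemma myCharpolyConj {n : ℕ} (U V A : Matrix (Fin n) (Fin n) ℝ)
    (h1 : U * V = 1) (h2 : V * U = 1) : (U * A * V).charpoly = A.charpoly := by
  set f := (Polynomial.C : ℝ →+* ℝ[X]).mapMatrix (m := Fin n) with hf
  have hc : Commute (Matrix.scalar (Fin n) (X : ℝ[X])) (f U) :=
    Matrix.scalar_commute _ (fun r => Commute.all _ _) _
  have hsc : f U * Matrix.scalar (Fin n) (X : ℝ[X]) * f V = Matrix.scalar (Fin n) (X : ℝ[X]) := by
    rw [← hc.eq, mul_assoc, ← _root_.map_mul f, h1, _root_.map_one, mul_one]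
  have key : charmatrix (U * A * V) = f U * charmatrix A * f V := by
    have : charmatrix (U * A * V) = Matrix.scalar (Fin n) X - f (U * A * V) := rfl
    rw [this, ← hsc, _root_.map_mul, _root_.map_mul]
    show _ = f U * (Matrix.scalar (Fin n) X - f A) * f V
    rw [mul_sub, sub_mul]
  have hdet : (f U).det * (f V).det = 1 := by
    rw [← Matrix.det_mul, ← _root_.map_mul, h1, _root_.map_one, Matrix.det_one]
  show (charmatrix (U * A * V)).det = (charmatrix A).det
  rw [key, Matrix.det_mul, Matrix.det_mul, mul_comm ((f U).det), mul_assoc, hdet, mul_one]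

private lemma myCharpolyDiagonal {n : ℕ} (d : Fin n → ℝ) :
    (Matrix.diagonal d).charpoly = ∏ i, (X - C (d i)) := by
  have h : charmatrix (Matrix.diagonal d) = Matrix.diagonal (fun i => X - C (d i)) := by
    ext i j
    by_cases h : i = j
    · subst h; simp [charmatrix_apply_eq]
    · rw [charmatrix_apply_ne _ _ _ h, Matrix.diagonal_apply_ne _ h,
        Matrix.diagonal_apply_ne _ h, map_zero, neg_zero]
  show (charmatrix (Matrix.diagonal d)).det = _
  rw [h, Matrix.det_diagonal]

private lemma myAevalDiagonal {n : ℕ} (d : Fin n → ℝ) (p : ℝ[X]) :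
    aeval (Matrix.diagonal d) p = Matrix.diagonal (fun i => p.eval (d i)) := by
  have h1 : aeval (Matrix.diagonal d) p = Matrix.diagonalAlgHom ℝ (aeval d p) := by
    rw [← Polynomial.aeval_algHom_apply]
    rfl
  rw [h1]
  have h2 : aeval d p = fun i => p.eval (d i) := by
    funext i
    have := Polynomial.aeval_algHom_apply (Pi.evalAlgHom ℝ (fun _ : Fin n => ℝ) i) d p
    rw [← Polynomial.coe_aeval_eq_eval]; exact this.symm
  rw [h2]
  rfl

private def myConjAlgHom {n : ℕ} (U V : Matrix (Fin n) (Fin n) ℝ)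
    (h1 : U * V = 1) (h2 : V * U = 1) :
    Matrix (Fin n) (Fin n) ℝ →ₐ[ℝ] Matrix (Fin n) (Fin n) ℝ where
  toFun A := U * A * V
  map_one' := by show U * 1 * V = 1; rw [mul_one, h1]
  map_mul' A B := by
    show U * (A * B) * V = (U * A * V) * (U * B * V)
    calc U * (A * B) * V = (U * A) * (V * U) * (B * V) := by rw [h2]; noncomm_ring
      _ = (U * A * V) * (U * B * V) := by noncomm_ring
  map_zero' := by simp
  map_add' A B := by
    show U * (A + B) * V = U * A * V + U * B * V
    noncomm_ring
  commutes' r := by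
    show U * algebraMap ℝ _ r * V = algebraMap ℝ _ r
    rw [Algebra.algebraMap_eq_smul_one, Matrix.mul_smul, mul_one, Matrix.smul_mul, h1]

private lemma myAevalMulVec {n : ℕ} (H : Matrix (Fin n) (Fin n) ℝ) (v : Fin n → ℝ) (t : ℝ)
    (hv : H *ᵥ v = t • v) (p : ℝ[X]) : (aeval H p) *ᵥ v = p.eval t • v := by
  induction p using Polynomial.induction_on' with
  | add p q hp hq => rw [map_add, Matrix.add_mulVec, hp, hq, eval_add, add_smul]
  | monomial m c =>
    have hpow : ∀ m : ℕ, (H ^ m) *ᵥ v = t ^ m • v := by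
      intro m; induction m with
      | zero => simp
      | succ m ih =>
        rw [pow_succ, ← Matrix.mulVec_mulVec, hv, Matrix.mulVec_smul, ih, pow_succ, smul_smul,
          mul_comm]
    rw [Polynomial.aeval_monomial, Algebra.algebraMap_eq_smul_one, smul_mul_assoc, one_mul,
      Matrix.smul_mulVec, hpow, Polynomial.eval_monomial, smul_smul]

private lemma myVecMulVecMulVec {n : ℕ} (y z v : Fin n → ℝ) :
    (Matrix.vecMulVec y z) *ᵥ v = (z ⬝ᵥ v) • y := by
  funext r
  simp only [Matrix.mulVec, Matrix.vecMulVec_apply, dotProduct, Pi.smul_apply,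
    smul_eq_mul, Finset.sum_mul]
  exact Finset.sum_congr rfl (fun s _ => by ring)

private lemma myMemSpectrumIffDet {n : ℕ} (H : Matrix (Fin n) (Fin n) ℝ) (x : ℝ) :
    x ∈ spectrum ℝ H ↔ (H - x • 1).det = 0 := by
  rw [spectrum.mem_iff]
  have h : algebraMap ℝ (Matrix (Fin n) (Fin n) ℝ) x - H = -(H - x • 1) := by
    rw [Algebra.algebraMap_eq_smul_one, neg_sub]
  rw [h, IsUnit.neg_iff, Matrix.isUnit_iff_isUnit_det, isUnit_iff_ne_zero, not_not]

private lemma myMemSpectrumIffEigen {n : ℕ} [NeZero n] (H : Matrix (Fin n) (Fin n) ℝ) (x : ℝ) :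
    x ∈ spectrum ℝ H ↔ ∃ v : Fin n → ℝ, v ≠ 0 ∧ H *ᵥ v = x • v := by
  rw [myMemSpectrumIffDet, ← Matrix.exists_mulVec_eq_zero_iff]
  constructor
  · rintro ⟨v, hv, h⟩
    refine ⟨v, hv, ?_⟩
    rwa [Matrix.sub_mulVec, Matrix.smul_mulVec, Matrix.one_mulVec, sub_eq_zero] at h
  · rintro ⟨v, hv, h⟩
    refine ⟨v, hv, ?_⟩
    rw [Matrix.sub_mulVec, Matrix.smul_mulVec, Matrix.one_mulVec, h, sub_self]

end Aux

/-- **Corollary.** Let `H` be an `n×n` real symmetric matrix whose largest eigenvalue `λ₁` is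
simple. Then `H` has exactly `k` (`2 ≤ k ≤ n`) distinct eigenvalues iff there exist `k` distinct
real numbers `λ₁, …, λ_k` such that (i) `H − λᵢI` is singular for `2 ≤ i ≤ k`, and
(ii) `∏_{i=2}^k (H − λᵢI) = b y yᵀ` with `H y = λ₁ y`, `b > 0` real, `y ∈ ℝⁿ` nonzero.
Moreover, such `λ₁, …, λ_k` are exactly the distinct eigenvalues of `H`. -/
theorem real_symmetric_distinct_eigenvalues_iff
    (n k : ℕ) (hk2 : 2 ≤ k) (hkn : k ≤ n)
    (H : Matrix (Fin n) (Fin n) ℝ) (hH : H.IsSymm)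
    (lam1 : ℝ) (hmem : lam1 ∈ spectrum ℝ H)
    (hmax : ∀ x : ℝ, x ∈ spectrum ℝ H → x ≤ lam1)
    (hsimple : H.charpoly.rootMultiplicity lam1 = 1) :
    ((spectrum ℝ H).ncard = k ↔
      ∃ μ : Fin k → ℝ, Function.Injective μ ∧
        (∀ i : Fin k, i ≠ ⟨0, by omega⟩ → (H - μ i • 1).det = 0) ∧
        ∃ b : ℝ, 0 < b ∧ ∃ y : Fin n → ℝ, y ≠ 0 ∧
          (Polynomial.aeval H)
              (∏ i ∈ Finset.univ.erase (⟨0, by omega⟩ : Fin k), (X - C (μ i))) =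
            b • Matrix.vecMulVec y y ∧
          H.mulVec y = μ ⟨0, by omega⟩ • y) ∧
    (∀ μ : Fin k → ℝ, Function.Injective μ →
      (∀ i : Fin k, i ≠ ⟨0, by omega⟩ → (H - μ i • 1).det = 0) →
      (∃ b : ℝ, 0 < b ∧ ∃ y : Fin n → ℝ, y ≠ 0 ∧
        (Polynomial.aeval H)
            (∏ i ∈ Finset.univ.erase (⟨0, by omega⟩ : Fin k), (X - C (μ i))) =
          b • Matrix.vecMulVec y y ∧
        H.mulVec y = μ ⟨0, by omega⟩ • y) →
      spectrum ℝ H = Set.range μ) := by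
  classical
  haveI : NeZero n := ⟨by omega⟩
  set i0 : Fin k := ⟨0, by omega⟩ with hi0def
  -- the "moreover" part, also used for the reverse implication of the iff
  have main : ∀ μ : Fin k → ℝ, Function.Injective μ →
      (∀ i : Fin k, i ≠ i0 → (H - μ i • 1).det = 0) →
      (∃ b : ℝ, 0 < b ∧ ∃ y : Fin n → ℝ, y ≠ 0 ∧
        (Polynomial.aeval H) (∏ i ∈ Finset.univ.erase i0, (X - C (μ i))) =
          b • Matrix.vecMulVec y y ∧
        H.mulVec y = μ i0 • y) →
      spectrum ℝ H = Set.range μ := by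
    rintro μ hinj hdets ⟨b, hb, y, hy, hP, hHy⟩
    ext x
    constructor
    · intro hx
      obtain ⟨v, hv, hHv⟩ := (myMemSpectrumIffEigen H x).1 hx
      by_cases hxr : ∃ i ∈ Finset.univ.erase i0, x = μ i
      · obtain ⟨i, _, hi⟩ := hxr; exact ⟨i, hi.symm⟩
      push_neg at hxr
      set c : ℝ := ∏ i ∈ Finset.univ.erase i0, (x - μ i) with hc
      have hc0 : c ≠ 0 :=
        Finset.prod_ne_zero_iff.2 (fun i hi => sub_ne_zero.2 (hxr i hi))
      have h1 : (aeval H (∏ i ∈ Finset.univ.erase i0, (X - C (μ i)))) *ᵥ v = c • v := by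
        rw [myAevalMulVec H v x hHv]
        congr 1
        simp [hc, eval_prod]
      rw [hP, Matrix.smul_mulVec, myVecMulVecMulVec, smul_smul] at h1
      -- h1 : (b * (y ⬝ᵥ v)) • y = c • v
      have hveq : v = (c⁻¹ * (b * (y ⬝ᵥ v))) • y := by
        rw [mul_smul, h1, smul_smul, inv_mul_cancel₀ hc0, one_smul]
      have hHv2 : H *ᵥ v = μ i0 • v := by
        conv_lhs => rw [hveq]
        conv_rhs => rw [hveq]
        rw [Matrix.mulVec_smul, hHy, smul_smul, smul_smul, mul_comm]
      have hxeq : x = μ i0 := by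
        have h3 : (x - μ i0) • v = 0 := by
          rw [sub_smul, ← hHv, hHv2, sub_self]
        rcases smul_eq_zero.1 h3 with h | h
        · linarith [sub_eq_zero.1 h]
        · exact absurd h hv
      exact ⟨i0, hxeq.symm⟩
    · rintro ⟨i, rfl⟩
      by_cases hi : i = i0
      · subst hi; exact (myMemSpectrumIffEigen H _).2 ⟨y, hy, hHy⟩
      · exact (myMemSpectrumIffDet H _).2 (hdets i hi)
  refine ⟨⟨?_, ?_⟩, main⟩
  · -- forward: ncard = k → ∃ μ ...
    intro hcard
    have hHer : H.IsHermitian := by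
      rw [Matrix.IsHermitian, Matrix.conjTranspose_eq_transpose_of_trivial]; exact hH
    set eig : Fin n → ℝ := hHer.eigenvalues with heig
    have hspec : spectrum ℝ H = Set.range eig := hHer.spectrum_real_eq_range_eigenvalues
    set U : Matrix (Fin n) (Fin n) ℝ := (hHer.eigenvectorUnitary : Matrix (Fin n) (Fin n) ℝ) with hUdef
    have hU1 : U * star U = 1 := Matrix.mem_unitaryGroup_iff.1 hHer.eigenvectorUnitary.2
    have hU2 : star U * U = 1 := Matrix.mem_unitaryGroup_iff'.1 hHer.eigenvectorUnitary.2
    have hDecomp : H = U * Matrix.diagonal eig * star U := by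
      have h := hHer.spectral_theorem
      rwa [RCLike.ofReal_real_eq_id, Function.id_comp] at h
    have hchar : H.charpoly = ∏ j, (X - C (eig j)) := by
      conv_lhs => rw [hDecomp]
      rw [myCharpolyConj U (star U) _ hU1 hU2, myCharpolyDiagonal]
    have hcount : (Finset.univ.filter (fun j => eig j = lam1)).card = 1 := by
      have h1 : H.charpoly.roots = Finset.univ.val.map eig := by
        rw [hchar]
        have h2 : (∏ j, (X - C (eig j)))
            = (Multiset.map (fun a => X - C a) (Finset.univ.val.map eig)).prod := by
          rw [Multiset.map_map]; rfl
        rw [h2, Polynomial.roots_multiset_prod_X_sub_C]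
      have h2 : Multiset.count lam1 (Finset.univ.val.map eig) = 1 := by
        rw [← h1, Polynomial.count_roots, hsimple]
      rw [Multiset.count_map] at h2
      rw [← h2]
      show (Finset.filter (fun j => eig j = lam1) Finset.univ).val.card = _
      congr 1
      rw [Finset.filter_val]
      exact Multiset.filter_congr (p := fun j => eig j = lam1) (q := fun a => lam1 = eig a)
        (fun x _ => eq_comm)
    obtain ⟨j0, hj0⟩ := Finset.card_eq_one.1 hcount
    have hj0eig : eig j0 = lam1 := by
      have hmem' : j0 ∈ ({j0} : Finset (Fin n)) := Finset.mem_singleton_self j0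
      rw [← hj0] at hmem'
      exact (Finset.mem_filter.1 hmem').2
    have huniq : ∀ j, eig j = lam1 → j = j0 := fun j hj => by
      have hmem' : j ∈ Finset.univ.filter (fun j => eig j = lam1) :=
        Finset.mem_filter.2 ⟨Finset.mem_univ j, hj⟩
      rw [hj0] at hmem'
      exact Finset.mem_singleton.1 hmem'
    -- construct μ
    set S : Finset ℝ := Finset.univ.image eig with hS
    have hSspec : spectrum ℝ H = ↑S := by
      rw [hspec, hS]; simp
    have hcardS : S.card = k := by rw [← hcard, hSspec, Set.ncard_coe_finset]
    have hlamS : lam1 ∈ S := by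
      rw [← Finset.mem_coe, ← hSspec]; exact hmem
    set e := Finset.equivFinOfCardEq hcardS with he
    set i1 : Fin k := e ⟨lam1, hlamS⟩ with hi1
    set σ : Equiv.Perm (Fin k) := Equiv.swap i0 i1 with hσ
    set μ : Fin k → ℝ := fun i => (e.symm (σ i) : ℝ) with hμ
    have hμinj : Function.Injective μ :=
      Subtype.val_injective.comp (e.symm.injective.comp σ.injective)
    have hμ0 : μ i0 = lam1 := by
      rw [hμ]; simp [hσ, Equiv.swap_apply_left, hi1]
    have hμS : ∀ i, μ i ∈ S := fun i => (e.symm (σ i)).2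
    have hμspec : ∀ i, μ i ∈ spectrum ℝ H := fun i => by
      rw [hSspec]; exact Finset.mem_coe.2 (hμS i)
    have hrange : Set.range μ = ↑S := by
      apply Set.eq_of_subset_of_subset
      · rintro x ⟨i, rfl⟩; exact hμS i
      · intro x hx
        exact ⟨σ.symm (e ⟨x, hx⟩), by simp [hμ]⟩
    refine ⟨μ, hμinj, ?_, ?_⟩
    · exact fun i _ => (myMemSpectrumIffDet H _).1 (hμspec i)
    · set b : ℝ := ∏ i ∈ Finset.univ.erase i0, (lam1 - μ i) with hbdef
      have hb : 0 < b := by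
        apply Finset.prod_pos
        intro i hi
        have hle : μ i ≤ lam1 := hmax _ (hμspec i)
        have hne : μ i ≠ lam1 := by
          intro h
          have : i = i0 := hμinj (by rw [h, hμ0])
          exact (Finset.mem_erase.1 hi).1 this
        exact sub_pos.2 (lt_of_le_of_ne hle hne)
      set y : Fin n → ℝ := fun r => U r j0 with hydef
      have hyb : y = ⇑(hHer.eigenvectorBasis j0) := by
        funext r
        rw [hydef]
        exact hHer.eigenvectorUnitary_apply r j0
      have hy : y ≠ 0 := by
        rw [hyb]
        intro h
        exact hHer.eigenvectorBasis.orthonormal.ne_zero j0 (by ext r; exact congrFun h r)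
      have hHy : H *ᵥ y = μ i0 • y := by
        rw [hyb, hμ0, ← hj0eig]
        exact hHer.mulVec_eigenvectorBasis j0
      refine ⟨b, hb, y, hy, ?_, hHy⟩
      set p : ℝ[X] := ∏ i ∈ Finset.univ.erase i0, (X - C (μ i)) with hpdef
      have heval : ∀ x : ℝ, p.eval x = ∏ i ∈ Finset.univ.erase i0, (x - μ i) := by
        intro x; simp [hpdef, eval_prod]
      have hd : ∀ j, p.eval (eig j) = if j = j0 then b else 0 := by
        intro j
        by_cases hj : j = j0
        · subst hj; rw [heval, hj0eig, if_pos rfl, hbdef]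
        · rw [heval, if_neg hj]
          have hne : eig j ≠ lam1 := fun h => hj (huniq j h)
          obtain ⟨i, hi⟩ : ∃ i, μ i = eig j := by
            have : eig j ∈ Set.range μ := by
              rw [hrange]
              exact Finset.mem_coe.2 (Finset.mem_image_of_mem eig (Finset.mem_univ j))
            exact this
          have hii0 : i ≠ i0 := fun h => hne (by rw [← hi, h, hμ0])
          exact Finset.prod_eq_zero (Finset.mem_erase.2 ⟨hii0, Finset.mem_univ i⟩)
            (by rw [hi, sub_self])
      have hcalc : aeval H p = U * Matrix.diagonal (fun j => p.eval (eig j)) * star U := by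
        conv_lhs => rw [hDecomp]
        rw [show U * Matrix.diagonal eig * star U
            = myConjAlgHom U (star U) hU1 hU2 (Matrix.diagonal eig) from rfl,
          Polynomial.aeval_algHom_apply, myAevalDiagonal]
        rfl
      rw [hcalc]
      ext r s
      rw [Matrix.mul_apply]
      have hentry : ∀ a, (U * Matrix.diagonal (fun j => p.eval (eig j))) r a * (star U) a s
          = if a = j0 then b * (y r * y s) else 0 := by
        intro a
        rw [Matrix.mul_diagonal, hd a, Matrix.star_apply, star_trivial]
        by_cases ha : a = j0
        · subst ha; rw [if_pos rfl, if_pos rfl, hydef]; ring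
        · rw [if_neg ha, if_neg ha, mul_zero, zero_mul]
      rw [Finset.sum_congr rfl (fun a _ => hentry a), Finset.sum_ite_eq' Finset.univ j0,
        if_pos (Finset.mem_univ j0)]
      simp [Matrix.smul_apply, Matrix.vecMulVec_apply]
  · -- reverse: ∃ μ ... → ncard = k
    rintro ⟨μ, hinj, hdets, hex⟩
    rw [main μ hinj hdets hex, ← Nat.card_coe_set_eq,
      Nat.card_congr (Equiv.ofInjective μ hinj).symm, Nat.card_eq_fintype_card, Fintype.card_fin]
end

section
/- Let G be a connected simple undirected graph of order n with Laplacian matrix L. Then G has exactly k (2 ≤ k ≤ n) distinct Laplacian eigenvalues if and only if there exist k − 1 distinct nonzero real numbers μ₁, μ₂, …, μ_{k−1} such that: (i) L − μᵢI is singular for each 1 ≤ i ≤ k − 1; and (ii) ∏_{i=1}^{k−1} (L − μᵢI) = (−1)^{k−1} (∏_{i=1}^{k−1} μᵢ / n) · J, where J is the n×n all-ones matrix. Moreover, in that case μ₁, μ₂, …, μ_{k−1}, 0 are exactly the k distinct Laplacian eigenvalues of G. -/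
open Polynomial Matrix

lemma aux_aeval_mulVec {m : ℕ} (M : Matrix (Fin m) (Fin m) ℝ) {v : Fin m → ℝ} {t : ℝ}
    (hv : M *ᵥ v = t • v) (q : ℝ[X]) : (aeval M q) *ᵥ v = q.eval t • v := by
  induction q using Polynomial.induction_on' with
  | add p q hp hq => rw [map_add, add_mulVec, hp, hq, eval_add, add_smul]
  | monomial k a =>
      rw [aeval_monomial, eval_monomial]
      have hpow : ∀ j : ℕ, (M ^ j) *ᵥ v = t ^ j • v := by
        intro j
        induction j with
        | zero => simp
        | succ j ih => rw [pow_succ, pow_succ, ← mulVec_mulVec, hv, mulVec_smul, ih,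
            smul_smul, mul_comm]
      rw [← mulVec_mulVec, hpow, mulVec_smul, algebraMap_eq_diagonal]
      ext i
      simp [mulVec_diagonal]; ring

lemma aux_eq_of_basis {m : ℕ} (M N : Matrix (Fin m) (Fin m) ℝ)
    (b : Module.Basis (Fin m) ℝ (Fin m → ℝ))
    (h : ∀ j, M *ᵥ (b j) = N *ᵥ (b j)) : M = N := by
  have : Matrix.toLin' M = Matrix.toLin' N := b.ext (by simpa [Matrix.toLin'_apply] using h)
  exact Matrix.toLin'.injective this

/-- **Theorem.** Let `G` be a connected simple graph of order `n` with Laplacian matrix `L`.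
Then `G` has exactly `k` (`2 ≤ k ≤ n`) distinct Laplacian eigenvalues iff there exist `k − 1`
distinct nonzero real numbers `μ₁, …, μ_{k−1}` such that (i) `L − μᵢI` is singular for each
`i`, and (ii) `∏_{i=1}^{k−1} (L − μᵢI) = (−1)^{k−1} (∏_{i=1}^{k−1} μᵢ / n) · J`, where `J` is
the all-ones matrix. Moreover, `μ₁, …, μ_{k−1}, 0` are then exactly the `k` distinct Laplacian
eigenvalues of `G`. -/
theorem laplacian_distinct_eigenvalues_iff
    (n k : ℕ) (hk2 : 2 ≤ k) (hkn : k ≤ n)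
    (G : SimpleGraph (Fin n)) [DecidableRel G.Adj] (hG : G.Connected) :
    ((spectrum ℝ (G.lapMatrix ℝ)).ncard = k ↔
      ∃ μ : Fin (k - 1) → ℝ, Function.Injective μ ∧ (∀ i, μ i ≠ 0) ∧
        (∀ i, (G.lapMatrix ℝ - μ i • 1).det = 0) ∧
        (Polynomial.aeval (G.lapMatrix ℝ)) (∏ i, (X - C (μ i))) =
          ((-1 : ℝ) ^ (k - 1) * (∏ i, μ i) / n) • Matrix.of (fun _ _ => (1 : ℝ))) ∧
    (∀ μ : Fin (k - 1) → ℝ, Function.Injective μ → (∀ i, μ i ≠ 0) →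
      (∀ i, (G.lapMatrix ℝ - μ i • 1).det = 0) →
      (Polynomial.aeval (G.lapMatrix ℝ)) (∏ i, (X - C (μ i))) =
        ((-1 : ℝ) ^ (k - 1) * (∏ i, μ i) / n) • Matrix.of (fun _ _ => (1 : ℝ)) →
      spectrum ℝ (G.lapMatrix ℝ) = insert (0 : ℝ) (Set.range μ)) := by
  classical
  have hn : 0 < n := by omega
  set L := G.lapMatrix ℝ with hLdef
  have hL : L.IsHermitian := (SimpleGraph.posSemidef_lapMatrix ℝ G).1
  have hnR : (n : ℝ) ≠ 0 := Nat.cast_ne_zero.2 hn.ne'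
  have hone : L *ᵥ (fun _ => (1:ℝ)) = 0 := G.lapMatrix_mulVec_const_eq_zero
  -- kernel is constants
  have hker : ∀ x : Fin n → ℝ, L *ᵥ x = 0 → ∃ c : ℝ, x = fun _ => c := by
    intro x hx
    have h := G.lapMatrix_mulVec_eq_zero_iff_forall_reachable (x := x)
    exact ⟨x ⟨0, hn⟩, funext fun i => (h.1 hx) i ⟨0, hn⟩ (hG.preconnected i ⟨0, hn⟩)⟩
  have hLJ : L * (Matrix.of fun _ _ => (1:ℝ)) = 0 := by
    ext i j
    have := congrFun hone i
    simpa [Matrix.mul_apply, Matrix.mulVec, dotProduct] using this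
  have h0spec : (0:ℝ) ∈ spectrum ℝ L := by
    rw [spectrum.zero_mem_iff]
    intro h
    obtain ⟨u, hu⟩ := h
    have h1 : (fun _ => (1:ℝ) : Fin n → ℝ) = 0 := by
      have h2 : ((u⁻¹ : (Matrix (Fin n) (Fin n) ℝ)ˣ) : Matrix (Fin n) (Fin n) ℝ) * L = 1 := by
        rw [← hu]; exact_mod_cast u.inv_mul
      calc (fun _ => (1:ℝ) : Fin n → ℝ)
          = (((u⁻¹ : (Matrix (Fin n) (Fin n) ℝ)ˣ) : Matrix (Fin n) (Fin n) ℝ) * L) *ᵥ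
            (fun _ => (1:ℝ)) := by rw [h2, Matrix.one_mulVec]
        _ = ((u⁻¹ : (Matrix (Fin n) (Fin n) ℝ)ˣ) : Matrix (Fin n) (Fin n) ℝ) *ᵥ
            (L *ᵥ (fun _ => (1:ℝ))) := by rw [Matrix.mulVec_mulVec]
        _ = 0 := by rw [hone, Matrix.mulVec_zero]
    exact one_ne_zero (congrFun h1 ⟨0, hn⟩)
  have hdet : ∀ t : ℝ, t ∈ spectrum ℝ L ↔ (L - t • 1).det = 0 := by
    intro t
    rw [spectrum.mem_iff, Matrix.isUnit_iff_isUnit_det, isUnit_iff_ne_zero, not_not]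
    have h3 : (algebraMap ℝ (Matrix (Fin n) (Fin n) ℝ)) t - L = -(L - t • 1) := by
      rw [neg_sub]; congr 1; rw [Algebra.algebraMap_eq_smul_one]
    rw [h3, Matrix.det_neg]
    constructor
    · intro h; rcases mul_eq_zero.1 h with h | h
      · exact absurd h (by positivity)
      · exact h
    · intro h; rw [h, mul_zero]
  -- eigen machinery
  set lam := hL.eigenvalues with hlam
  have hspec : spectrum ℝ L = Set.range lam := hL.spectrum_real_eq_range_eigenvalues
  let b : Module.Basis (Fin n) ℝ (Fin n → ℝ) :=
    hL.eigenvectorBasis.toBasis.map (WithLp.linearEquiv 2 ℝ (Fin n → ℝ))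
  have hb : ∀ j, (b j : Fin n → ℝ) = ⇑(hL.eigenvectorBasis j) := by
    intro j
    simp [b, Module.Basis.map_apply, OrthonormalBasis.coe_toBasis]
  have heig : ∀ j, L *ᵥ (b j) = lam j • (b j) := by
    intro j; rw [hb]; exact hL.mulVec_eigenvectorBasis j
  have hbne : ∀ j, (b j : Fin n → ℝ) ≠ 0 := fun j => b.ne_zero j
  have hsum0 : ∀ j, lam j ≠ 0 → ∑ i, b j i = 0 := by
    intro j hj
    have key : lam j * ∑ i, b j i = 0 := by
      have h4 : (fun _ => (1:ℝ)) ⬝ᵥ (L *ᵥ b j) = ((fun _ => (1:ℝ)) ᵥ* L) ⬝ᵥ b j :=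
        Matrix.dotProduct_mulVec _ _ _
      rw [heig, dotProduct_smul] at h4
      have hsymm : Lᵀ = L := (G.isSymm_lapMatrix (R := ℝ)).eq
      have h5 : (fun _ => (1:ℝ)) ᵥ* L = 0 := by
        rw [← hsymm, Matrix.vecMul_transpose]
        exact hone
      rw [h5, zero_dotProduct] at h4
      simpa [dotProduct] using h4
    exact (mul_eq_zero.1 key).resolve_left hj
  have hconst : ∀ j, lam j = 0 → ∃ c : ℝ, c ≠ 0 ∧ (b j : Fin n → ℝ) = fun _ => c := by
    intro j hj
    obtain ⟨c, hc⟩ := hker (b j) (by rw [heig, hj, zero_smul])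
    refine ⟨c, ?_, hc⟩
    rintro rfl
    exact hbne j (by rw [hc]; ext i; rfl)
  -- the "moreover" statement
  have Hmore : ∀ μ : Fin (k - 1) → ℝ, Function.Injective μ → (∀ i, μ i ≠ 0) →
      (∀ i, (L - μ i • 1).det = 0) →
      (Polynomial.aeval L) (∏ i, (X - C (μ i))) =
        ((-1 : ℝ) ^ (k - 1) * (∏ i, μ i) / n) • Matrix.of (fun _ _ => (1 : ℝ)) →
      spectrum ℝ L = insert (0 : ℝ) (Set.range μ) := by
    intro μ hinj hμ0 hdets hprod
    apply Set.Subset.antisymm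
    · intro t ht
      by_contra hnot
      simp only [Set.mem_insert_iff, Set.mem_range, not_or, not_exists] at hnot
      obtain ⟨ht0, htμ⟩ := hnot
      obtain ⟨j, rfl⟩ : ∃ j, lam j = t := by rwa [hspec] at ht
      have h6 : (aeval L) (X * ∏ i, (X - C (μ i))) *ᵥ b j =
          ((lam j) * ∏ i, (lam j - μ i)) • b j := by
        rw [aux_aeval_mulVec L (heig j)]
        congr 1
        simp [eval_prod]
      have h7 : (aeval L) (X * ∏ i, (X - C (μ i))) = 0 := by
        rw [_root_.map_mul, aeval_X, hprod, Matrix.mul_smul, hLJ, smul_zero]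
      rw [h7, Matrix.zero_mulVec] at h6
      have h8 : (lam j) * ∏ i, (lam j - μ i) ≠ 0 := by
        apply mul_ne_zero ht0
        apply Finset.prod_ne_zero_iff.2
        intro i _
        exact sub_ne_zero.2 fun h => htμ i h.symm
      exact hbne j (by simpa [smul_eq_zero, h8] using h6.symm)
    · rintro t (rfl | ⟨i, rfl⟩)
      · exact h0spec
      · rw [hdet]; exact hdets i
  refine ⟨⟨?_, ?_⟩, Hmore⟩
  · -- ncard = k → ∃ μ
    intro hcard
    have hfin : (spectrum ℝ L).Finite := by
      rw [hspec]; exact Set.finite_range _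
    have hT : ((spectrum ℝ L) \ {0}).Finite := hfin.diff
    have hTcard : ((spectrum ℝ L) \ {0}).ncard = k - 1 := by
      rw [Set.ncard_diff_singleton_of_mem h0spec, hcard]
    haveI := hT.fintype
    have hc : Fintype.card ((spectrum ℝ L) \ {0} : Set ℝ) = k - 1 := by
      rw [← Nat.card_eq_fintype_card, Nat.card_coe_set_eq, hTcard]
    obtain e := (Fintype.equivFinOfCardEq hc).symm
    set μ : Fin (k - 1) → ℝ := fun i => (e i : ℝ) with hμdef
    have hinj : Function.Injective μ := Subtype.val_injective.comp e.injective
    have hrange : Set.range μ = (spectrum ℝ L) \ {0} := by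
      ext x
      constructor
      · rintro ⟨i, rfl⟩; exact (e i).2
      · intro hx; exact ⟨e.symm ⟨x, hx⟩, by simp [hμdef]⟩
    have hmemrange : ∀ i, μ i ∈ (spectrum ℝ L) \ {0} := fun i =>
      hrange ▸ Set.mem_range_self i
    have hμ0 : ∀ i, μ i ≠ 0 := fun i => (hmemrange i).2
    refine ⟨μ, hinj, hμ0, fun i => (hdet _).1 (hmemrange i).1, ?_⟩
    apply aux_eq_of_basis _ _ b
    intro j
    rw [aux_aeval_mulVec L (heig j)]
    rcases eq_or_ne (lam j) 0 with h0 | h0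
    · obtain ⟨c, hc0, hcb⟩ := hconst j h0
      rw [h0]
      have hev : Polynomial.eval 0 (∏ i, (X - C (μ i))) = (-1:ℝ)^(k-1) * ∏ i, μ i := by
        rw [eval_prod]
        simp only [eval_sub, eval_X, eval_C, zero_sub]
        rw [Finset.prod_congr rfl (fun x _ => (neg_one_mul (μ x)).symm),
          Finset.prod_mul_distrib, Finset.prod_const, Finset.card_univ, Fintype.card_fin]
      rw [hev, hcb]
      ext i
      simp only [Pi.smul_apply, smul_eq_mul, Matrix.mulVec, dotProduct,
        Matrix.smul_apply, Matrix.of_apply, Finset.sum_const, Finset.card_univ,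
        Fintype.card_fin, nsmul_eq_mul]
      field_simp
    · have hmem : lam j ∈ Set.range μ := by
        rw [hrange]
        exact ⟨hL.eigenvalues_mem_spectrum_real j, h0⟩
      obtain ⟨i0, hi0⟩ := hmem
      have hev : Polynomial.eval (lam j) (∏ i, (X - C (μ i))) = 0 := by
        simp only [eval_prod, eval_sub, eval_X, eval_C]
        exact Finset.prod_eq_zero (Finset.mem_univ i0) (by rw [hi0, sub_self])
      rw [hev, zero_smul]
      have hs := hsum0 j h0
      ext i
      symm
      simp only [Matrix.mulVec, dotProduct, Matrix.smul_apply, Matrix.of_apply,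
        smul_eq_mul, mul_one, Pi.zero_apply]
      rw [← Finset.mul_sum, hs, mul_zero]
  · -- ∃ μ → ncard = k
    rintro ⟨μ, hinj, hμ0, hdets, hprod⟩
    rw [Hmore μ hinj hμ0 hdets hprod]
    rw [Set.ncard_insert_of_notMem (by rintro ⟨i, hi⟩; exact hμ0 i hi) (Set.finite_range μ)]
    have : (Set.range μ).ncard = k - 1 := by
      rw [← Set.image_univ, Set.ncard_image_of_injective _ hinj, Set.ncard_univ,
        Nat.card_eq_fintype_card, Fintype.card_fin]
    omega
end

section
/- Let G be a connected simple undirected graph of order n and size m (m = number of edges) with no isolated vertices, and let 𝓛 = D^{−1/2} L D^{−1/2} be its normalized Laplacian matrix. Then G has exactly k (2 ≤ k ≤ n) distinct normalized-Laplacian eigenvalues if and only if there exist k − 1 distinct nonzero real numbers μ₁, μ₂, …, μ_{k−1} such that: (i) 𝓛 − μᵢI is singular for each 1 ≤ i ≤ k − 1; and (ii) ∏_{i=1}^{k−1} (𝓛 − μᵢI) = (−1)^{k−1} (∏_{i=1}^{k−1} μᵢ / (2m)) · α·αᵀ, where α ∈ ℝⁿ is the vector with entries αⱼ = √dⱼ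 (dⱼ the degree of vertex j). Moreover, in that case μ₁, μ₂, …, μ_{k−1}, 0 are exactly the k distinct normalized-Laplacian eigenvalues of G. -/
open Polynomial Matrix

/-- The normalized Laplacian matrix `𝓛 = D^{−1/2} L D^{−1/2}` of a graph, with entries
`𝓛_{ij} = L_{ij} / √(dᵢ dⱼ)`. -/
noncomputable def normLapMatrix {n : ℕ} (G : SimpleGraph (Fin n)) [DecidableRel G.Adj] :
    Matrix (Fin n) (Fin n) ℝ :=
  Matrix.of fun i j =>
    G.lapMatrix ℝ i j / Real.sqrt ((G.degree i : ℝ) * (G.degree j : ℝ))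

namespace NLAux

/-- polynomial applied to eigenvector -/
lemma aeval_mulVec {N : ℕ} {M : Matrix (Fin N) (Fin N) ℝ} {v : Fin N → ℝ} {t : ℝ}
    (h : M *ᵥ v = t • v) (p : ℝ[X]) : (Polynomial.aeval M p) *ᵥ v = p.eval t • v := by
  induction p using Polynomial.induction_on' with
  | add p q hp hq => rw [map_add, add_mulVec, hp, hq, eval_add, add_smul]
  | monomial m a =>
    have hpow : ∀ m : ℕ, M ^ m *ᵥ v = t ^ m • v := by
      intro m
      induction m with
      | zero => simp
      | succ m ih =>
        rw [pow_succ, ← mulVec_mulVec, h, mulVec_smul, ih, smul_smul, pow_succ, mul_comm]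
    rw [aeval_monomial, Algebra.algebraMap_eq_smul_one, smul_mul_assoc, one_mul,
      smul_mulVec, hpow, eval_monomial, smul_smul]

lemma aeval_conj {N : ℕ} (U V D : Matrix (Fin N) (Fin N) ℝ)
    (h1 : U * V = 1) (h2 : V * U = 1) (p : ℝ[X]) :
    Polynomial.aeval (U * D * V) p = U * Polynomial.aeval D p * V := by
  have hpow : ∀ m : ℕ, (U * D * V) ^ m = U * D ^ m * V := by
    intro m
    induction m with
    | zero => simpa using h1.symm
    | succ m ih =>
      rw [pow_succ, ih, pow_succ]
      simp only [mul_assoc]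
      rw [← mul_assoc V U, h2, one_mul]
  induction p using Polynomial.induction_on' with
  | add p q hp hq => rw [map_add, map_add, hp, hq, mul_add, add_mul]
  | monomial m a =>
    rw [aeval_monomial, aeval_monomial, hpow]
    simp only [Algebra.algebraMap_eq_smul_one, smul_mul_assoc, one_mul, Matrix.mul_smul]

lemma aeval_diag {N : ℕ} (d : Fin N → ℝ) (p : ℝ[X]) :
    Polynomial.aeval (Matrix.diagonal d) p = Matrix.diagonal (fun j => p.eval (d j)) := by
  induction p using Polynomial.induction_on' with
  | add p q hp hq =>
    rw [map_add, hp, hq, diagonal_add]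
    simp [eval_add]
  | monomial m a =>
    rw [aeval_monomial, diagonal_pow, Algebra.algebraMap_eq_smul_one, smul_mul_assoc, one_mul,
      ← diagonal_smul]
    ext i j
    by_cases h : i = j <;> simp [h, eval_monomial, diagonal]


lemma unitary_mul_star {N : ℕ} {A : Matrix (Fin N) (Fin N) ℝ} (hA : A.IsHermitian) :
    (hA.eigenvectorUnitary : Matrix (Fin N) (Fin N) ℝ) *
      star (hA.eigenvectorUnitary : Matrix (Fin N) (Fin N) ℝ) = 1 :=
  Unitary.mul_star_self_of_mem hA.eigenvectorUnitary.2

lemma star_mul_unitary {N : ℕ} {A : Matrix (Fin N) (Fin N) ℝ} (hA : A.IsHermitian) :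
    star (hA.eigenvectorUnitary : Matrix (Fin N) (Fin N) ℝ) *
      (hA.eigenvectorUnitary : Matrix (Fin N) (Fin N) ℝ) = 1 :=
  Unitary.star_mul_self_of_mem hA.eigenvectorUnitary.2

lemma aeval_spectral {N : ℕ} {A : Matrix (Fin N) (Fin N) ℝ} (hA : A.IsHermitian) (p : ℝ[X]) :
    Polynomial.aeval A p = (hA.eigenvectorUnitary : Matrix (Fin N) (Fin N) ℝ) *
      Matrix.diagonal (fun j => p.eval (hA.eigenvalues j)) *
      star (hA.eigenvectorUnitary : Matrix (Fin N) (Fin N) ℝ) := by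
  conv_lhs => rw [hA.spectral_theorem, Unitary.conjStarAlgAut_apply]
  rw [aeval_conj _ _ _ (unitary_mul_star hA) (star_mul_unitary hA), aeval_diag]
  congr 1

lemma aeval_sub_C {N : ℕ} (A : Matrix (Fin N) (Fin N) ℝ) (x : ℝ) :
    Polynomial.aeval A (X - C x) = A - x • 1 := by
  rw [map_sub, aeval_X, aeval_C, Algebra.algebraMap_eq_smul_one]

lemma det_sub_smul {N : ℕ} {A : Matrix (Fin N) (Fin N) ℝ} (hA : A.IsHermitian) (x : ℝ) :
    (A - x • 1).det = ∏ j, (hA.eigenvalues j - x) := by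
  rw [← aeval_sub_C A x, aeval_spectral hA, det_mul, det_mul, mul_comm, ← mul_assoc,
    ← det_mul, star_mul_unitary hA, det_one, one_mul, det_diagonal]
  simp

lemma mem_spectrum_iff {N : ℕ} (M : Matrix (Fin N) (Fin N) ℝ) (x : ℝ) :
    x ∈ spectrum ℝ M ↔ (M - x • 1).det = 0 := by
  rw [spectrum.mem_iff, Matrix.isUnit_iff_isUnit_det]
  have h : algebraMap ℝ (Matrix (Fin N) (Fin N) ℝ) x - M = -(M - x • 1) := by
    rw [Algebra.algebraMap_eq_smul_one, neg_sub]
  rw [h, det_neg, isUnit_iff_ne_zero]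
  simp only [ne_eq, not_not, mul_eq_zero]
  constructor
  · rintro (h1 | h1)
    · exact absurd h1 (by positivity)
    · exact h1
  · exact fun h1 => Or.inr h1

lemma spec_eq {N : ℕ} {A : Matrix (Fin N) (Fin N) ℝ} (hA : A.IsHermitian) :
    spectrum ℝ A = Set.range hA.eigenvalues := by
  ext x
  rw [mem_spectrum_iff, det_sub_smul hA, Finset.prod_eq_zero_iff]
  simp only [Finset.mem_univ, true_and, sub_eq_zero, Set.mem_range]

section Graph

variable {n : ℕ} (G : SimpleGraph (Fin n)) [DecidableRel G.Adj]

/-- The vector `α` with `α j = √(d j)`. -/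
noncomputable def alphaV : Fin n → ℝ := fun j => Real.sqrt (G.degree j)

lemma normLap_factor :
    normLapMatrix G =
      Matrix.diagonal (fun i => (Real.sqrt (G.degree i))⁻¹) * G.lapMatrix ℝ *
        Matrix.diagonal (fun i => (Real.sqrt (G.degree i))⁻¹) := by
  ext i j
  rw [Matrix.mul_diagonal, Matrix.diagonal_mul]
  show G.lapMatrix ℝ i j / Real.sqrt ((G.degree i : ℝ) * (G.degree j : ℝ)) = _
  rw [Real.sqrt_mul (by positivity), div_eq_mul_inv, mul_inv]
  ring

lemma sqrt_deg_pos (hd : ∀ v, 0 < G.degree v) (v : Fin n) : 0 < Real.sqrt (G.degree v) := by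
  have := hd v
  have : (0:ℝ) < (G.degree v : ℝ) := by exact_mod_cast this
  exact Real.sqrt_pos.2 this

lemma mulVec_alphaV (hd : ∀ v, 0 < G.degree v) : normLapMatrix G *ᵥ alphaV G = 0 := by
  rw [normLap_factor, ← Matrix.mulVec_mulVec, ← Matrix.mulVec_mulVec]
  have h1 : Matrix.diagonal (fun i => (Real.sqrt (G.degree i))⁻¹) *ᵥ alphaV G =
      fun _ => (1 : ℝ) := by
    funext i
    rw [Matrix.mulVec_diagonal]
    exact inv_mul_cancel₀ (ne_of_gt (sqrt_deg_pos G hd i))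
  rw [h1, G.lapMatrix_mulVec_const_eq_zero, Matrix.mulVec_zero]

lemma ker_normLap (hd : ∀ v, 0 < G.degree v) (hG : G.Connected) {x : Fin n → ℝ} (hx : normLapMatrix G *ᵥ x = 0) :
    ∃ c : ℝ, x = c • alphaV G := by
  have hne : Nonempty (Fin n) := hG.nonempty
  rw [normLap_factor, ← Matrix.mulVec_mulVec, ← Matrix.mulVec_mulVec] at hx
  set y := Matrix.diagonal (fun i => (Real.sqrt (G.degree i))⁻¹) *ᵥ x with hy
  have hLy : G.lapMatrix ℝ *ᵥ y = 0 := by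
    funext i
    have := congrFun hx i
    rw [Matrix.mulVec_diagonal] at this
    have h0 : (Real.sqrt (G.degree i))⁻¹ ≠ 0 := inv_ne_zero (ne_of_gt (sqrt_deg_pos G hd i))
    exact (mul_eq_zero.1 this).resolve_left h0
  have hreach := (G.lapMatrix_mulVec_eq_zero_iff_forall_reachable (x := y)).1
    hLy
  obtain ⟨i₀⟩ := hne
  refine ⟨y i₀, ?_⟩
  funext j
  have hyj : y j = y i₀ := hreach j i₀ (hG.preconnected j i₀)
  have : y j = (Real.sqrt (G.degree j))⁻¹ * x j := Matrix.mulVec_diagonal _ _ _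
  have hxj : x j = Real.sqrt (G.degree j) * y j := by
    rw [this, ← mul_assoc, mul_inv_cancel₀ (ne_of_gt (sqrt_deg_pos G hd j)), one_mul]
  rw [hxj, hyj]
  show Real.sqrt (G.degree j) * y i₀ = y i₀ * alphaV G j
  rw [mul_comm]; rfl

lemma isHerm : (normLapMatrix G).IsHermitian := by
  rw [Matrix.IsHermitian, Matrix.conjTranspose_eq_transpose_of_trivial]
  ext i j
  show normLapMatrix G j i = normLapMatrix G i j
  show G.lapMatrix ℝ j i / Real.sqrt ((G.degree j : ℝ) * (G.degree i : ℝ)) =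
    G.lapMatrix ℝ i j / Real.sqrt ((G.degree i : ℝ) * (G.degree j : ℝ))
  rw [mul_comm ((G.degree j : ℝ)) _]
  congr 1
  have := G.isSymm_lapMatrix (R := ℝ)
  exact this.apply i j

lemma alphaV_dot : alphaV G ⬝ᵥ alphaV G = 2 * (G.edgeFinset.card : ℝ) := by
  show (∑ j, alphaV G j * alphaV G j) = _
  have h : ∀ j, alphaV G j * alphaV G j = (G.degree j : ℝ) := fun j =>
    Real.mul_self_sqrt (by positivity)
  rw [Finset.sum_congr rfl (fun j _ => h j), ← Nat.cast_sum,
    SimpleGraph.sum_degrees_eq_twice_card_edges]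
  push_cast
  ring

lemma vecMulVec_mulVec' {N : ℕ} (a b v : Fin N → ℝ) :
    Matrix.vecMulVec a b *ᵥ v = (b ⬝ᵥ v) • a := by
  funext i
  show (∑ j, a i * b j * v j) = (∑ j, b j * v j) * a i
  rw [Finset.sum_mul]
  exact Finset.sum_congr rfl fun j _ => by ring

lemma spectrum_eq_of_props {k : ℕ} (hG : G.Connected)
    (hd : ∀ v, 0 < G.degree v)
    (μ : Fin (k - 1) → ℝ) (hμne : ∀ i, μ i ≠ 0)
    (hsing : ∀ i, (normLapMatrix G - μ i • 1).det = 0)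
    (hprod : (Polynomial.aeval (normLapMatrix G)) (∏ i, (X - C (μ i))) =
      ((-1 : ℝ) ^ (k - 1) * (∏ i, μ i) / (2 * (G.edgeFinset.card : ℝ))) •
        Matrix.vecMulVec (fun j => Real.sqrt (G.degree j)) (fun j => Real.sqrt (G.degree j))) :
    spectrum ℝ (normLapMatrix G) = insert (0 : ℝ) (Set.range μ) := by
  have hA0 : normLapMatrix G *ᵥ alphaV G = 0 := mulVec_alphaV G hd
  have hαne : alphaV G ≠ 0 := by
    obtain ⟨i⟩ := hG.nonempty
    intro h
    exact absurd (congrFun h i) (ne_of_gt (sqrt_deg_pos G hd i))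
  apply Set.eq_of_subset_of_subset
  · intro x hx
    rw [mem_spectrum_iff] at hx
    obtain ⟨v, hv0, hv⟩ := (Matrix.exists_mulVec_eq_zero_iff).2 hx
    have hAv : normLapMatrix G *ᵥ v = x • v := by
      rw [Matrix.sub_mulVec, Matrix.smul_mulVec, Matrix.one_mulVec, sub_eq_zero] at hv
      exact hv
    by_contra hmem
    simp only [Set.mem_insert_iff, Set.mem_range, not_or, not_exists] at hmem
    obtain ⟨hx0, hxμ⟩ := hmem
    have h1 := aeval_mulVec hAv (∏ i, (X - C (μ i)))
    rw [hprod, Matrix.smul_mulVec, vecMulVec_mulVec'] at h1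
    have heval : Polynomial.eval x (∏ i, (X - C (μ i))) = ∏ i, (x - μ i) := by
      rw [Polynomial.eval_prod]; simp
    rw [heval] at h1
    have ht : (∏ i, (x - μ i)) ≠ 0 := Finset.prod_ne_zero_iff.2 fun i _ =>
      sub_ne_zero.2 fun h => (hxμ i h.symm)
    set c := ((-1 : ℝ) ^ (k - 1) * (∏ i, μ i) / (2 * (G.edgeFinset.card : ℝ))) with hc
    have hv2 : v = (∏ i, (x - μ i))⁻¹ •
        (c • (((fun j => Real.sqrt (G.degree j)) ⬝ᵥ v) • (fun j => Real.sqrt ((G.degree j : ℝ))))) := by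
      rw [← h1.symm, smul_smul, inv_mul_cancel₀ ht, one_smul]
    have hzero : normLapMatrix G *ᵥ v = 0 := by
      rw [hv2]
      simp only [Matrix.mulVec_smul]
      have : normLapMatrix G *ᵥ (fun j => Real.sqrt ((G.degree j : ℝ))) = 0 := hA0
      rw [this, smul_zero, smul_zero, smul_zero]
    rw [hAv] at hzero
    rcases smul_eq_zero.1 hzero with h | h
    exacts [hx0 h, hv0 h]
  · intro x hx
    rcases Set.mem_insert_iff.1 hx with rfl | ⟨i, rfl⟩
    · rw [mem_spectrum_iff]
      have h0 : normLapMatrix G - (0 : ℝ) • 1 = normLapMatrix G := by simp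
      rw [h0, ← Matrix.exists_mulVec_eq_zero_iff]
      exact ⟨alphaV G, hαne, hA0⟩
    · rw [mem_spectrum_iff]
      exact hsing i

lemma euclid_inner {N : ℕ} (x y : EuclideanSpace ℝ (Fin N)) :
    (inner ℝ x y : ℝ) = ∑ i, x i * y i := by
  rw [PiLp.inner_apply]
  simp [RCLike.inner_apply, mul_comm]

lemma forward {k : ℕ} (hk2 : 2 ≤ k) (hG : G.Connected) (hd : ∀ v, 0 < G.degree v)
    (hcard : (spectrum ℝ (normLapMatrix G)).ncard = k) :
    ∃ μ : Fin (k - 1) → ℝ, Function.Injective μ ∧ (∀ i, μ i ≠ 0) ∧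
      (∀ i, (normLapMatrix G - μ i • 1).det = 0) ∧
      (Polynomial.aeval (normLapMatrix G)) (∏ i, (X - C (μ i))) =
        ((-1 : ℝ) ^ (k - 1) * (∏ i, μ i) / (2 * (G.edgeFinset.card : ℝ))) •
          Matrix.vecMulVec (fun j => Real.sqrt (G.degree j))
            (fun j => Real.sqrt (G.degree j)) := by
  classical
  have hA : (normLapMatrix G).IsHermitian := isHerm G
  have hspec : spectrum ℝ (normLapMatrix G) = Set.range hA.eigenvalues := spec_eq hA
  have hA0 : normLapMatrix G *ᵥ alphaV G = 0 := mulVec_alphaV G hd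
  have hαne : alphaV G ≠ 0 := by
    obtain ⟨i⟩ := hG.nonempty
    intro h
    exact absurd (congrFun h i) (ne_of_gt (sqrt_deg_pos G hd i))
  have h2m : (0 : ℝ) < 2 * (G.edgeFinset.card : ℝ) := by
    rw [← alphaV_dot G]
    obtain ⟨i₀⟩ := hG.nonempty
    refine Finset.sum_pos' (fun i _ => mul_self_nonneg _) ⟨i₀, Finset.mem_univ _, ?_⟩
    exact mul_pos (sqrt_deg_pos G hd i₀) (sqrt_deg_pos G hd i₀)
  have h2m' : (2 * (G.edgeFinset.card : ℝ)) ≠ 0 := ne_of_gt h2m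
  -- 0 is an eigenvalue
  have h0mem : (0 : ℝ) ∈ spectrum ℝ (normLapMatrix G) := by
    rw [mem_spectrum_iff]
    have h0 : normLapMatrix G - (0 : ℝ) • 1 = normLapMatrix G := by simp
    rw [h0, ← Matrix.exists_mulVec_eq_zero_iff]
    exact ⟨alphaV G, hαne, hA0⟩
  -- the finset of eigenvalues
  set F : Finset ℝ := Finset.image hA.eigenvalues Finset.univ with hF
  have hFcoe : (F : Set ℝ) = Set.range hA.eigenvalues := by
    rw [hF, Finset.coe_image, Finset.coe_univ, Set.image_univ]
  have hFcard : F.card = k := by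
    rw [← hcard, hspec, ← hFcoe, Set.ncard_coe_finset]
  have h0F : (0 : ℝ) ∈ F := by
    rw [← Finset.mem_coe, hFcoe, ← hspec]
    exact h0mem
  set F' : Finset ℝ := F.erase 0 with hF'
  have hF'card : F'.card = k - 1 := by rw [hF', Finset.card_erase_of_mem h0F, hFcard]
  set e : (F' : Type) ≃ Fin (k - 1) := Finset.equivFinOfCardEq hF'card with he
  set μ : Fin (k - 1) → ℝ := fun i => ((e.symm i : F') : ℝ) with hμ
  have hinj : Function.Injective μ := fun i j h =>
    e.symm.injective (Subtype.coe_injective h)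
  have hrange : Set.range μ = (F' : Set ℝ) := by
    ext x
    constructor
    · rintro ⟨i, rfl⟩
      exact (e.symm i).2
    · intro hx
      exact ⟨e ⟨x, hx⟩, by simp [hμ]⟩
  have hμF' : ∀ i, μ i ∈ F' := fun i => (e.symm i).2
  have hμne : ∀ i, μ i ≠ 0 := fun i => (Finset.mem_erase.1 (hμF' i)).1
  have hμF : ∀ i, μ i ∈ F := fun i => (Finset.mem_erase.1 (hμF' i)).2
  have hsing : ∀ i, (normLapMatrix G - μ i • 1).det = 0 := by
    intro i
    rw [det_sub_smul hA]
    obtain ⟨j, _, hj⟩ := Finset.mem_image.1 (hμF i)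
    exact Finset.prod_eq_zero (Finset.mem_univ j) (by rw [hj, sub_self])
  -- kernel facts
  have hker : ∀ j : Fin n, hA.eigenvalues j = 0 → ∃ c : ℝ, ⇑(hA.eigenvectorBasis j) = c • alphaV G := by
    intro j hj
    apply ker_normLap G hd hG
    have := hA.mulVec_eigenvectorBasis j
    rwa [hj, zero_smul] at this
  have horth := orthonormal_iff_ite.mp hA.eigenvectorBasis.orthonormal
  -- existence of j₀
  obtain ⟨j₀, -, hj₀⟩ : ∃ j ∈ Finset.univ, hA.eigenvalues j = 0 := Finset.mem_image.1 h0F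
  -- nonvanishing of kernel coefficients
  have hcne : ∀ (j : Fin n) (c : ℝ), ⇑(hA.eigenvectorBasis j) = c • alphaV G → c ≠ 0 := by
    intro j c hc hc0
    have h1 : (inner ℝ (hA.eigenvectorBasis j) (hA.eigenvectorBasis j) : ℝ) = 1 := by
      rw [horth j j]; simp
    rw [euclid_inner] at h1
    have : ∀ i, (hA.eigenvectorBasis j) i = 0 := by
      intro i
      rw [show ((hA.eigenvectorBasis j) : Fin n → ℝ) i = (c • alphaV G) i from congrFun hc i,
        hc0]
      simp
    simp only [this, mul_zero, Finset.sum_const_zero] at h1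
    exact one_ne_zero h1.symm
  -- uniqueness of j₀
  have huniq : ∀ j : Fin n, hA.eigenvalues j = 0 → j = j₀ := by
    intro j hj
    by_contra hne'
    obtain ⟨c, hc⟩ := hker j hj
    obtain ⟨c₀, hc₀⟩ := hker j₀ hj₀
    have h0 : (inner ℝ (hA.eigenvectorBasis j) (hA.eigenvectorBasis j₀) : ℝ) = 0 := by
      rw [horth j j₀]; simp [hne']
    rw [euclid_inner] at h0
    have hsum : ∑ i, (hA.eigenvectorBasis j) i * (hA.eigenvectorBasis j₀) i
        = c * c₀ * (2 * (G.edgeFinset.card : ℝ)) := by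
      rw [← alphaV_dot G]
      show _ = c * c₀ * ∑ i, alphaV G i * alphaV G i
      rw [Finset.mul_sum]
      refine Finset.sum_congr rfl fun i _ => ?_
      rw [show ((hA.eigenvectorBasis j) : Fin n → ℝ) i = (c • alphaV G) i from congrFun hc i,
        show ((hA.eigenvectorBasis j₀) : Fin n → ℝ) i = (c₀ • alphaV G) i from congrFun hc₀ i]
      simp only [Pi.smul_apply, smul_eq_mul]
      ring
    rw [hsum] at h0
    rcases mul_eq_zero.1 h0 with h | h
    · rcases mul_eq_zero.1 h with h' | h'
      · exact hcne j c hc h'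
      · exact hcne j₀ c₀ hc₀ h'
    · exact h2m' h
  -- the eigenvector for j₀
  obtain ⟨c₀, hc₀⟩ := hker j₀ hj₀
  have hc₀ne : c₀ ≠ 0 := hcne j₀ c₀ hc₀
  have hcsq : c₀ * c₀ * (2 * (G.edgeFinset.card : ℝ)) = 1 := by
    have h1 : (inner ℝ (hA.eigenvectorBasis j₀) (hA.eigenvectorBasis j₀) : ℝ) = 1 := by
      rw [horth j₀ j₀]; simp
    rw [euclid_inner] at h1
    rw [← h1, ← alphaV_dot G]
    show c₀ * c₀ * ∑ i, alphaV G i * alphaV G i = _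
    rw [Finset.mul_sum]
    refine (Finset.sum_congr rfl fun i _ => ?_).symm
    rw [show ((hA.eigenvectorBasis j₀) : Fin n → ℝ) i = (c₀ • alphaV G) i from congrFun hc₀ i]
    simp only [Pi.smul_apply, smul_eq_mul]
    ring
  -- evaluation of the characteristic product on eigenvalues
  set p : ℝ[X] := ∏ i, (X - C (μ i)) with hp
  have hgeval : ∀ j, Polynomial.eval (hA.eigenvalues j) p = ∏ i, (hA.eigenvalues j - μ i) := by
    intro j
    rw [hp, Polynomial.eval_prod]
    simp
  set c₀p : ℝ := (-1 : ℝ) ^ (k - 1) * ∏ i, μ i with hc₀p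
  have hg0 : Polynomial.eval (hA.eigenvalues j₀) p = c₀p := by
    rw [hgeval, hj₀]
    rw [hc₀p]
    calc ∏ i : Fin (k-1), ((0:ℝ) - μ i) = ∏ i : Fin (k-1), (-1) * μ i :=
          Finset.prod_congr rfl fun i _ => by ring
      _ = (-1 : ℝ) ^ (k - 1) * ∏ i, μ i := by
          rw [Finset.prod_mul_distrib, Finset.prod_const, Finset.card_univ, Fintype.card_fin]
  have hgz : ∀ j, j ≠ j₀ → Polynomial.eval (hA.eigenvalues j) p = 0 := by
    intro j hj
    have hlne : hA.eigenvalues j ≠ 0 := fun h => hj (huniq j h)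
    have hlF' : hA.eigenvalues j ∈ F' := Finset.mem_erase.2 ⟨hlne, Finset.mem_image_of_mem _ (Finset.mem_univ j)⟩
    have : hA.eigenvalues j ∈ Set.range μ := by rw [hrange]; exact hlF'
    obtain ⟨i, hi⟩ := this
    rw [hgeval]
    exact Finset.prod_eq_zero (Finset.mem_univ i) (by rw [← hi, sub_self])
  -- the identity
  refine ⟨μ, hinj, hμne, hsing, ?_⟩
  rw [← hp, aeval_spectral hA]
  ext a b
  rw [Matrix.mul_apply]
  have hterm : ∀ c : Fin n,
      ((hA.eigenvectorUnitary : Matrix (Fin n) (Fin n) ℝ) * Matrix.diagonal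
        (fun j => Polynomial.eval (hA.eigenvalues j) p)) a c *
        (star (hA.eigenvectorUnitary : Matrix (Fin n) (Fin n) ℝ)) c b =
      (hA.eigenvectorUnitary : Matrix (Fin n) (Fin n) ℝ) a c *
        Polynomial.eval (hA.eigenvalues c) p * (hA.eigenvectorUnitary : Matrix (Fin n) (Fin n) ℝ) b c := by
    intro c
    rw [Matrix.mul_diagonal]
    have hst : (star (hA.eigenvectorUnitary : Matrix (Fin n) (Fin n) ℝ)) c b =
        (hA.eigenvectorUnitary : Matrix (Fin n) (Fin n) ℝ) b c := by
      simp [Matrix.star_apply]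
    rw [hst]
  rw [Finset.sum_congr rfl fun c _ => hterm c]
  rw [Finset.sum_eq_single j₀ (fun c _ hc => by rw [hgz c hc]; ring)
    (fun h => absurd (Finset.mem_univ j₀) h)]
  rw [hg0]
  have hUc : ∀ i : Fin n, (hA.eigenvectorUnitary : Matrix (Fin n) (Fin n) ℝ) i j₀ =
      c₀ * alphaV G i := by
    intro i
    rw [Matrix.IsHermitian.eigenvectorUnitary_apply, congrFun hc₀ i]
    simp
  rw [hUc a, hUc b]
  simp only [Matrix.smul_apply, Matrix.vecMulVec_apply, smul_eq_mul]
  have hcc : c₀ * c₀ = (2 * (G.edgeFinset.card : ℝ))⁻¹ := eq_inv_of_mul_eq_one_right (by linarith [hcsq])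
  rw [← hc₀p, div_eq_mul_inv, ← hcc]
  show c₀ * alphaV G a * c₀p * (c₀ * alphaV G b) =
    c₀p * (c₀ * c₀) * (alphaV G a * alphaV G b)
  ring

end Graph

end NLAux

/-- **Theorem.** Let `G` be a connected simple graph of order `n` and size `m`, with no
isolated vertices, and let `𝓛` be its normalized Laplacian matrix. Then `G` has exactly `k`
(`2 ≤ k ≤ n`) distinct normalized-Laplacian eigenvalues iff there exist `k − 1` distinct
nonzero real numbers `μ₁, …, μ_{k−1}` such that (i) `𝓛 − μᵢI` is singular for each `i`, and
(ii) `∏_{i=1}^{k−1} (𝓛 − μᵢI) = (−1)^{k−1} (∏_{i=1}^{k−1} μᵢ / (2m)) · α αᵀ`, where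
`αⱼ = √dⱼ`. Moreover, `μ₁, …, μ_{k−1}, 0` are then exactly the `k` distinct
normalized-Laplacian eigenvalues of `G`. -/
theorem normalized_laplacian_distinct_eigenvalues_iff
    (n k : ℕ) (hk2 : 2 ≤ k) (hkn : k ≤ n)
    (G : SimpleGraph (Fin n)) [DecidableRel G.Adj] (hG : G.Connected)
    (hd : ∀ v, 0 < G.degree v) :
    ((spectrum ℝ (normLapMatrix G)).ncard = k ↔
      ∃ μ : Fin (k - 1) → ℝ, Function.Injective μ ∧ (∀ i, μ i ≠ 0) ∧
        (∀ i, (normLapMatrix G - μ i • 1).det = 0) ∧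
        (Polynomial.aeval (normLapMatrix G)) (∏ i, (X - C (μ i))) =
          ((-1 : ℝ) ^ (k - 1) * (∏ i, μ i) / (2 * (G.edgeFinset.card : ℝ))) •
            Matrix.vecMulVec (fun j => Real.sqrt (G.degree j))
              (fun j => Real.sqrt (G.degree j))) ∧
    (∀ μ : Fin (k - 1) → ℝ, Function.Injective μ → (∀ i, μ i ≠ 0) →
      (∀ i, (normLapMatrix G - μ i • 1).det = 0) →
      (Polynomial.aeval (normLapMatrix G)) (∏ i, (X - C (μ i))) =
        ((-1 : ℝ) ^ (k - 1) * (∏ i, μ i) / (2 * (G.edgeFinset.card : ℝ))) •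
          Matrix.vecMulVec (fun j => Real.sqrt (G.degree j))
            (fun j => Real.sqrt (G.degree j)) →
      spectrum ℝ (normLapMatrix G) = insert (0 : ℝ) (Set.range μ)) := by
  constructor
  · constructor
    · intro hcard
      exact NLAux.forward G hk2 hG hd hcard
    · rintro ⟨μ, hinj, hμne, hsing, hprod⟩
      have hs := NLAux.spectrum_eq_of_props G (k := k) hG hd μ hμne hsing hprod
      rw [hs]
      have h0 : (0 : ℝ) ∉ Set.range μ := by
        rintro ⟨i, hi⟩
        exact hμne i hi
      rw [Set.ncard_insert_of_notMem h0 (Set.finite_range μ)]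
      have hr : (Set.range μ).ncard = k - 1 := by
        rw [show Set.range μ = ((Finset.image μ Finset.univ : Finset ℝ) : Set ℝ) by simp,
          Set.ncard_coe_finset, Finset.card_image_of_injective _ hinj, Finset.card_univ,
          Fintype.card_fin]
      omega
  · intro μ hinj hμne hsing hprod
    exact NLAux.spectrum_eq_of_props G (k := k) hG hd μ hμne hsing hprod
end

section
/- Let G be a finite simple undirected graph whose adjacency matrix has n distinct eigenvalues (n the order of G). Then every nonidentity automorphism of G has order 2; consequently the automorphism group of G is Abelian. -/
open Polynomial Matrix

section Aux

variable {V : Type*} [Fintype V] [DecidableEq V]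
    (G : SimpleGraph V) [DecidableRel G.Adj]

open scoped RealInnerProductSpace

lemma aut_sq_aux
    (h : (spectrum ℝ (G.adjMatrix ℝ)).ncard = Fintype.card V)
    (φ : Equiv.Perm V) (hφ : ∀ u v, G.Adj (φ u) (φ v) ↔ G.Adj u v) :
    ∀ w, φ (φ w) = w := by
  classical
  set A := G.adjMatrix ℝ with hAdef
  have hA : A.IsHermitian := by
    have := G.isSymm_adjMatrix (α := ℝ)
    rwa [Matrix.IsHermitian, Matrix.conjTranspose_eq_transpose_of_trivial]
  -- eigenvalues are injective
  have hinj : Function.Injective hA.eigenvalues := by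
    rw [hA.spectrum_real_eq_range_eigenvalues] at h
    have : Set.range hA.eigenvalues = ↑(Finset.univ.image hA.eigenvalues) := by
      simp
    rw [this, Set.ncard_coe_finset] at h
    have := Finset.card_image_iff.mp (h.trans (Finset.card_univ).symm)
    exact fun a b hab => this (Finset.mem_coe.mpr (Finset.mem_univ a)) (Finset.mem_coe.mpr (Finset.mem_univ b)) hab
  set b := hA.eigenvectorBasis with hb
  let T : EuclideanSpace ℝ V ≃ₗᵢ[ℝ] EuclideanSpace ℝ V :=
    LinearIsometryEquiv.piLpCongrLeft 2 ℝ ℝ φ.symm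
  have hT : ∀ (x : EuclideanSpace ℝ V) (u : V), T x u = x (φ u) := fun x u => rfl
  let L : EuclideanSpace ℝ V → EuclideanSpace ℝ V := fun x => WithLp.toLp 2 (A *ᵥ x)
  have hL : ∀ (x : EuclideanSpace ℝ V) (u : V), L x u = (A *ᵥ (x : V → ℝ)) u := fun x u => rfl
  have hcomm : ∀ x : EuclideanSpace ℝ V, L (T x) = T (L x) := by
    intro x
    apply WithLp.ofLp_injective 2; funext u
    have hAkey : ∀ w, A u w = A (φ u) (φ w) := by
      intro w; simp only [hAdef, SimpleGraph.adjMatrix_apply, hφ]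
    calc L (T x) u = ∑ w, A u w * x (φ w) := by
          simp [hL, Matrix.mulVec, dotProduct, hT]
      _ = ∑ w, A (φ u) (φ w) * x (φ w) := by simp_rw [← hAkey]
      _ = ∑ w, A (φ u) w * x w := Fintype.sum_equiv φ _ _ (fun w => rfl)
      _ = (A *ᵥ (x : V → ℝ)) (φ u) := rfl
      _ = _ := (hT (L x) u).symm
  have hsymm : ∀ x y : EuclideanSpace ℝ V, ⟪x, L y⟫ = ⟪L x, y⟫ := by
    intro x y
    simp only [PiLp.inner_apply, RCLike.inner_apply, starRingEnd_apply, star_trivial]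
    calc ∑ u, L y u * x u = ∑ u, x u * L y u := Finset.sum_congr rfl fun _ _ => mul_comm _ _
      _         = (x : V → ℝ) ⬝ᵥ (A *ᵥ y) := rfl
      _ = ((x : V → ℝ) ᵥ* A) ⬝ᵥ (y : V → ℝ) := Matrix.dotProduct_mulVec _ _ _
      _ = (A *ᵥ (x : V → ℝ)) ⬝ᵥ (y : V → ℝ) := by
          rw [← Matrix.mulVec_transpose, (G.isSymm_adjMatrix (α := ℝ)).eq]
      _ = ∑ u, L x u * y u := rfl
      _ = ∑ u, y u * L x u := Finset.sum_congr rfl fun _ _ => mul_comm _ _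
  have hLb : ∀ i, L (b i) = hA.eigenvalues i • b i := fun i => WithLp.ofLp_injective 2 (hA.mulVec_eigenvectorBasis i)
  have key : ∀ i, T (T (b i)) = b i := by
    intro i
    set w : EuclideanSpace ℝ V := T (b i) with hw
    have hAw : L w = hA.eigenvalues i • w := by
      rw [hw, hcomm, hLb, _root_.map_smul]
    have hcoef : ∀ j, j ≠ i → ⟪b j, w⟫ = 0 := by
      intro j hj
      have h1 : ⟪b j, L w⟫ = hA.eigenvalues i * ⟪b j, w⟫ := by
        rw [hAw]; exact real_inner_smul_right _ _ _
      have h2 : ⟪L (b j), w⟫ = hA.eigenvalues j * ⟪b j, w⟫ := by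
        rw [hLb]; exact real_inner_smul_left _ _ _
      have h3 := hsymm (b j) w
      have hne : hA.eigenvalues j - hA.eigenvalues i ≠ 0 :=
        sub_ne_zero.mpr (fun hEq => hj (hinj hEq))
      have h4 : (hA.eigenvalues j - hA.eigenvalues i) * ⟪b j, w⟫ = 0 := by
        rw [h1, h2] at h3
        rw [sub_mul]; linarith
      exact (mul_eq_zero.mp h4).resolve_left hne
    have hw2 : w = ⟪b i, w⟫ • b i := by
      have hs := b.sum_repr' w
      conv_lhs => rw [← hs]
      exact Finset.sum_eq_single i (fun j _ hj => by rw [hcoef j hj, zero_smul])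
        (fun hi => absurd (Finset.mem_univ i) hi)
    have hbi : ⟪b i, b i⟫ = (1 : ℝ) := by
      have hn := b.orthonormal.1 i
      rw [real_inner_self_eq_norm_sq, hn]; norm_num
    have hnorm : ⟪w, w⟫ = (1 : ℝ) := by
      rw [hw, LinearIsometryEquiv.inner_map_map, hbi]
    have hc2 : ⟪b i, w⟫ * ⟪b i, w⟫ = (1 : ℝ) := by
      calc ⟪b i, w⟫ * ⟪b i, w⟫
          = ⟪b i, w⟫ * ⟪b i, w⟫ * ⟪b i, b i⟫ := by rw [hbi, mul_one]
        _ = ⟪w, w⟫ := by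
            nth_rewrite 3 [hw2]; nth_rewrite 3 [hw2]
            rw [real_inner_smul_left, real_inner_smul_right]; ring
        _ = 1 := hnorm
    calc T (T (b i)) = T w := by rw [← hw]
      _ = T (⟪b i, w⟫ • b i) := by rw [← hw2]
      _ = ⟪b i, w⟫ • w := by rw [_root_.map_smul, ← hw]
      _ = ⟪b i, w⟫ • (⟪b i, w⟫ • b i) := by rw [← hw2]
      _ = b i := by rw [smul_smul, hc2, one_smul]
  have hTT : ∀ x : EuclideanSpace ℝ V, T (T x) = x := by
    intro x
    have hs := b.sum_repr' x
    calc T (T x) = T (T (∑ j, ⟪b j, x⟫ • b j)) := by rw [hs]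
      _ = ∑ j, ⟪b j, x⟫ • T (T (b j)) := by
          rw [map_sum, map_sum]; simp_rw [_root_.map_smul]
      _ = ∑ j, ⟪b j, x⟫ • b j := by simp_rw [key]
      _ = x := hs
  intro w0
  have hx := hTT (EuclideanSpace.single (φ (φ w0)) 1)
  have he : (T (T (EuclideanSpace.single (φ (φ w0)) 1)) : EuclideanSpace ℝ V) w0
      = EuclideanSpace.single (φ (φ w0)) (1 : ℝ) w0 := by rw [hx]
  rw [hT, hT, EuclideanSpace.single_apply, EuclideanSpace.single_apply] at he
  rw [if_pos rfl] at he
  by_contra hne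
  rw [if_neg (fun hc : w0 = φ (φ w0) => hne hc.symm)] at he
  exact one_ne_zero he

end Aux

/-- **Proposition (Mowshowitz).** Let `G` be a finite simple undirected graph whose adjacency
matrix has `n` distinct eigenvalues (`n` the order of `G`). Then every nonidentity
automorphism of `G` has order 2; consequently the automorphism group of `G` is Abelian. -/
theorem aut_order_two_of_distinct_eigenvalues
    (V : Type*) [Fintype V] [DecidableEq V]
    (G : SimpleGraph V) [DecidableRel G.Adj]
    (h : (spectrum ℝ (G.adjMatrix ℝ)).ncard = Fintype.card V) :
    (∀ φ : Equiv.Perm V, (∀ u v, G.Adj (φ u) (φ v) ↔ G.Adj u v) → φ ≠ 1 → orderOf φ = 2) ∧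
    (∀ φ ψ : Equiv.Perm V, (∀ u v, G.Adj (φ u) (φ v) ↔ G.Adj u v) →
      (∀ u v, G.Adj (ψ u) (ψ v) ↔ G.Adj u v) → φ * ψ = ψ * φ) := by
  have sq : ∀ φ : Equiv.Perm V, (∀ u v, G.Adj (φ u) (φ v) ↔ G.Adj u v) → φ * φ = 1 := by
    intro φ hφ
    ext w
    exact aut_sq_aux G h φ hφ w
  constructor
  · intro φ hφ hne
    exact orderOf_eq_prime (by rw [pow_two]; exact sq φ hφ) hne
  · intro φ ψ hφ hψ
    have hmul : ∀ u v, G.Adj ((φ * ψ) u) ((φ * ψ) v) ↔ G.Adj u v := by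
      intro u v
      simp only [Equiv.Perm.mul_apply]
      rw [hφ, hψ]
    have h1 := sq φ hφ
    have h2 := sq ψ hψ
    have h3 := sq (φ * ψ) hmul
    calc φ * ψ = (φ * ψ)⁻¹ := (inv_eq_of_mul_eq_one_right h3).symm
      _ = ψ⁻¹ * φ⁻¹ := mul_inv_rev _ _
      _ = ψ * φ := by rw [inv_eq_of_mul_eq_one_right h1, inv_eq_of_mul_eq_one_right h2]
end
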